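/- arXiv:1609.03919 — 3 statements merged into one kernel-verified Lean document; each statement's English description precedes it below -/
import Mathlib

section
/- Let n \ge 1, S odd, and a,b,c integers with gcd(a,b,c)=1, a \equiv 2^\alpha A (mod 2^n) with A odd and \alpha+1 < n, and 2^\alpha | c. Then G(a,b,c;S;2^n) = (1/4) G(SA;2^{n-\alpha}) \cdot G(SA\Delta;2^{n+\alpha+2}), where \Delta = 4ac-b^2. -/
open Finset

noncomputable def Gsum (S : ℤ) (k : ℕ) : ℂ :=
  ∑ x ∈ Finset.range k,
    Complex.exp (2 * Real.pi * Complex.I * ((S * (x : ℤ) ^ 2 : ℤ) : ℂ) / (k : ℂ))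

noncomputable def Gsum2 (a b c S : ℤ) (k : ℕ) : ℂ :=
  ∑ x ∈ Finset.range k, ∑ y ∈ Finset.range k,
    Complex.exp (2 * Real.pi * Complex.I *
      ((S * (a * (x : ℤ) ^ 2 + b * (x : ℤ) * (y : ℤ) + c * (y : ℤ) ^ 2) : ℤ) : ℂ) / (k : ℂ))

noncomputable def psi (k : ℕ) (r : ℤ) : ℂ :=
  Complex.exp (2 * Real.pi * Complex.I * (r : ℂ) / (k : ℂ))

lemma psi_add (k : ℕ) (r s : ℤ) : psi k (r + s) = psi k r * psi k s := by
  rw [psi, psi, psi, ← Complex.exp_add]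
  congr 1
  push_cast
  ring

lemma psi_k_mul (k : ℕ) (t : ℤ) : psi k ((k : ℤ) * t) = 1 := by
  rcases Nat.eq_zero_or_pos k with hk | hk
  · simp [psi, hk]
  · rw [psi]
    have hkC : (k : ℂ) ≠ 0 := Nat.cast_ne_zero.mpr hk.ne'
    have : 2 * (Real.pi : ℂ) * Complex.I * (((k : ℤ) * t : ℤ) : ℂ) / (k : ℂ)
        = (t : ℂ) * (2 * Real.pi * Complex.I) := by
      push_cast
      field_simp
    rw [this, Complex.exp_int_mul_two_pi_mul_I]

lemma psi_congr {k : ℕ} {r s : ℤ} (h : r ≡ s [ZMOD (k : ℤ)]) : psi k r = psi k s := by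
  obtain ⟨t, ht⟩ := Int.ModEq.dvd h
  have : r = s + (k : ℤ) * (-t) := by linarith [ht]
  rw [this, psi_add, psi_k_mul, mul_one]

lemma psi_pow (a b : ℕ) (r : ℤ) : psi (2 ^ (a + b)) (2 ^ a * r) = psi (2 ^ b) r := by
  rw [psi, psi]
  congr 1
  have h2a : ((2:ℂ) ^ a) ≠ 0 := pow_ne_zero _ two_ne_zero
  have h2b : ((2:ℂ) ^ b) ≠ 0 := pow_ne_zero _ two_ne_zero
  push_cast
  rw [pow_add]
  field_simp

lemma psi_pow_nat (k : ℕ) (r : ℤ) (t : ℕ) : psi k (r * t) = psi k r ^ t := by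
  rw [psi, psi, ← Complex.exp_nat_mul]
  congr 1
  push_cast
  ring

lemma psi_two_odd {r : ℤ} (h : Odd r) : psi 2 r = -1 := by
  have : psi 2 r = Complex.exp ((r : ℂ) * (Real.pi * Complex.I)) := by
    rw [psi]
    congr 1
    push_cast
    field_simp
  rw [this, Complex.exp_int_mul, Complex.exp_pi_mul_I, Odd.neg_one_zpow h]

lemma sum_range_mul' (F : ℕ → ℂ) (d e : ℕ) :
    ∑ x ∈ range (d * e), F x = ∑ t ∈ range e, ∑ s ∈ range d, F (s + d * t) := by
  induction e with
  | zero => simp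
  | succ e ih =>
      rw [Nat.mul_succ, Finset.sum_range_add, ih, Finset.sum_range_succ]
      congr 1
      apply Finset.sum_congr rfl
      intro s _
      congr 1
      ring

lemma sum_range_period (F : ℕ → ℂ) (d e : ℕ) (hF : ∀ x, F (x + d) = F x) :
    ∑ x ∈ range (d * e), F x = (e : ℂ) * ∑ x ∈ range d, F x := by
  rw [sum_range_mul']
  have key : ∀ t s : ℕ, F (s + d * t) = F s := by
    intro t
    induction t with
    | zero => simp
    | succ t ih =>
        intro s
        have : s + d * (t + 1) = (s + d * t) + d := by ring
        rw [this, hF, ih]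
  rw [Finset.sum_congr rfl fun t _ => Finset.sum_congr rfl fun s _ => key t s]
  simp [Finset.sum_const, mul_comm]

lemma sum_range_period' (F : ℕ → ℂ) (n d e : ℕ) (h : n = d * e) (hF : ∀ x, F (x + d) = F x) :
    ∑ x ∈ range n, F x = (e : ℂ) * ∑ x ∈ range d, F x := by
  subst h
  exact sum_range_period F d e hF

lemma sum_range_mul'' (F : ℕ → ℂ) (n d e : ℕ) (h : n = d * e) :
    ∑ x ∈ range n, F x = ∑ t ∈ range e, ∑ s ∈ range d, F (s + d * t) := by
  subst h
  exact sum_range_mul' F d e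

lemma sum_range_shift_one (F : ℕ → ℂ) (k : ℕ) (hF : ∀ x, F (x + k) = F x) :
    ∑ x ∈ range k, F (x + 1) = ∑ x ∈ range k, F x := by
  have h1 : ∑ x ∈ range (k + 1), F x = (∑ x ∈ range k, F (x + 1)) + F 0 :=
    Finset.sum_range_succ' F k
  have h2 : ∑ x ∈ range (k + 1), F x = (∑ x ∈ range k, F x) + F k :=
    Finset.sum_range_succ F k
  have h3 : F k = F 0 := by simpa using hF 0
  rw [h3] at h2
  have := h1.symm.trans h2
  exact add_right_cancel this

lemma sum_range_unit (k u v : ℕ) (hk : 0 < k) (huv : u * v ≡ 1 [MOD k]) (F : ℕ → ℂ) :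
    ∑ x ∈ range k, F ((u * x) % k) = ∑ x ∈ range k, F x := by
  apply Finset.sum_nbij' (i := fun x => (u * x) % k) (j := fun y => (v * y) % k)
  · intro a ha
    exact Finset.mem_range.mpr (Nat.mod_lt _ hk)
  · intro a ha
    exact Finset.mem_range.mpr (Nat.mod_lt _ hk)
  · intro a ha
    have h1 : v * ((u * a) % k) ≡ a [MOD k] := by
      calc v * ((u * a) % k) ≡ v * (u * a) [MOD k] := (Nat.mod_modEq (u * a) k).mul_left v
        _ = (u * v) * a := by ring
        _ ≡ 1 * a [MOD k] := huv.mul_right a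
        _ = a := one_mul a
    have h2 : v * ((u * a) % k) % k = a % k := h1
    rwa [Nat.mod_eq_of_lt (Finset.mem_range.mp ha)] at h2
  · intro a ha
    have h1 : u * ((v * a) % k) ≡ a [MOD k] := by
      calc u * ((v * a) % k) ≡ u * (v * a) [MOD k] := (Nat.mod_modEq (v * a) k).mul_left u
        _ = (u * v) * a := by ring
        _ ≡ 1 * a [MOD k] := huv.mul_right a
        _ = a := one_mul a
    have h2 : u * ((v * a) % k) % k = a % k := h1
    rwa [Nat.mod_eq_of_lt (Finset.mem_range.mp ha)] at h2
  · intro a ha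
    rfl

lemma sum_psi_geom (k : ℕ) (hk : 0 < k) (r : ℤ) :
    ∑ t ∈ range k, psi k (r * t) = if (k : ℤ) ∣ r then (k : ℂ) else 0 := by
  by_cases h : (k : ℤ) ∣ r
  · obtain ⟨s, hs⟩ := id h
    have : ∀ t ∈ range k, psi k (r * t) = 1 := by
      intro t _
      have : r * t = (k : ℤ) * (s * t) := by rw [hs]; ring
      rw [this, psi_k_mul]
    rw [Finset.sum_congr rfl this, if_pos h]
    simp
  · have hne : psi k r ≠ 1 := by
      intro hone
      rw [psi, Complex.exp_eq_one_iff] at hone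
      obtain ⟨j, hj⟩ := hone
      have hkC : (k : ℂ) ≠ 0 := Nat.cast_ne_zero.mpr hk.ne'
      have hpi : (Real.pi : ℂ) ≠ 0 := by
        simpa using Complex.ofReal_ne_zero.mpr Real.pi_ne_zero
      have : (r : ℂ) = (j : ℂ) * (k : ℂ) := by
        field_simp at hj
        have h2 : (2 : ℂ) ≠ 0 := two_ne_zero
        have hI : Complex.I ≠ 0 := Complex.I_ne_zero
        -- hj : 2 * π * I * r = j * (2 * π * I) * k  (roughly)
        apply mul_left_cancel₀ (mul_ne_zero (mul_ne_zero h2 hpi) hI)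
        rw [show 2 * (Real.pi:ℂ) * Complex.I * ((j:ℂ) * (k:ℂ))
             = (j:ℂ) * (2 * (Real.pi:ℂ) * Complex.I) * (k:ℂ) by ring]
        linear_combination (2 * (Real.pi:ℂ) * Complex.I) * hj
      apply h
      have : r = j * k := by exact_mod_cast this
      exact ⟨j, by rw [this]; ring⟩
    have hpow : ∀ t : ℕ, psi k (r * t) = psi k r ^ t := fun t => psi_pow_nat k r t
    rw [Finset.sum_congr rfl fun t _ => hpow t, geom_sum_eq hne]
    have : psi k r ^ k = 1 := by
      rw [← psi_pow_nat]
      have : r * (k : ℤ) = (k : ℤ) * r := by ring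
      rw [this, psi_k_mul]
    rw [this, if_neg h]
    simp


lemma gsum_def (S : ℤ) (k : ℕ) : Gsum S k = ∑ x ∈ range k, psi k (S * (x : ℤ) ^ 2) := rfl

lemma psi_congr_dvd {k : ℕ} {r s : ℤ} (h : (k : ℤ) ∣ (r - s)) : psi k r = psi k s := by
  apply psi_congr
  rw [Int.modEq_iff_dvd]
  simpa [neg_sub] using h.neg_right

lemma gsum_congr {T T' : ℤ} {k : ℕ} (h : T ≡ T' [ZMOD (k : ℤ)]) : Gsum T k = Gsum T' k := by
  rw [gsum_def, gsum_def]
  exact Finset.sum_congr rfl fun x _ => psi_congr (h.mul_right _)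

lemma natModEq_of_int {a b k : ℕ} (h : (a : ℤ) ≡ (b : ℤ) [ZMOD (k : ℤ)]) : a ≡ b [MOD k] := by
  have h' : (a : ℤ) % (k : ℤ) = (b : ℤ) % (k : ℤ) := h
  exact_mod_cast h'

lemma exists_nat_rep (k : ℕ) (hk : 0 < k) (x : ℤ) :
    ∃ u : ℕ, (u : ℤ) ≡ x [ZMOD (k : ℤ)] := by
  refine ⟨(x % (k : ℤ)).toNat, ?_⟩
  have hknz : (0:ℤ) < (k:ℤ) := by exact_mod_cast hk
  have h0 : (0:ℤ) ≤ x % (k:ℤ) := Int.emod_nonneg x hknz.ne'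
  have : ((x % (k:ℤ)).toNat : ℤ) = x % (k:ℤ) := Int.toNat_of_nonneg h0
  rw [this]
  exact Int.emod_emod_of_dvd x dvd_rfl

lemma odd_isCoprime_pow (j : ℕ) {A : ℤ} (hA : Odd A) : IsCoprime ((2:ℤ)^j) A := by
  apply IsCoprime.pow_left
  rw [Int.isCoprime_iff_gcd_eq_one, Int.gcd]
  have h1 : Odd A.natAbs := Int.natAbs_odd.mpr hA
  simpa using h1.coprime_two_left

lemma exists_int_inv (j : ℕ) {A : ℤ} (hA : Odd A) :
    ∃ A' : ℤ, A * A' ≡ 1 [ZMOD ((2:ℤ)^j)] := by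
  obtain ⟨p, q, hpq⟩ := (odd_isCoprime_pow j hA).symm
  refine ⟨p, ?_⟩
  have h1 : (1:ℤ) ≡ A * p [ZMOD (2:ℤ)^j] := Int.modEq_iff_dvd.mpr ⟨-q, by linarith [hpq]⟩
  exact h1.symm

lemma gsum_mul_sq (k : ℕ) (hk : 0 < k) (T : ℤ) (u v : ℕ) (huv : u * v ≡ 1 [MOD k]) :
    Gsum (T * (u : ℤ) ^ 2) k = Gsum T k := by
  rw [gsum_def, gsum_def,
    ← sum_range_unit k u v hk huv (fun x => psi k (T * (x : ℤ) ^ 2))]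
  apply Finset.sum_congr rfl
  intro x _
  have h1 : (((u * x) % k : ℕ) : ℤ) ≡ ((u : ℤ) * (x : ℤ)) [ZMOD (k : ℤ)] := by
    push_cast
    exact Int.emod_emod_of_dvd _ dvd_rfl
  have h2 := (h1.pow 2).mul_left T
  have := psi_congr (k := k) h2
  rw [this]
  congr 1
  ring

-- key vanishing lemma: sum over odd residues
lemma sum_odd_sq_zero (d : ℕ) (T : ℤ) (hT : Odd T) :
    ∑ s ∈ range (2 ^ (d + 3)), psi (2 ^ (d + 4)) (T * (1 + 2 * (s : ℤ)) ^ 2) = 0 := by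
  set F : ℕ → ℂ := fun s => psi (2 ^ (d + 4)) (T * (1 + 2 * (s : ℤ)) ^ 2) with hFdef
  have key : ∀ x : ℕ, F (x + 2 ^ (d + 1)) = -F x := by
    intro x
    have expand : T * (1 + 2 * ((x : ℤ) + 2 ^ (d + 1))) ^ 2 =
        T * (1 + 2 * (x : ℤ)) ^ 2 + 2 ^ (d + 3) * (T * (1 + 2 * (x : ℤ)))
          + ((2 ^ (d + 4) : ℕ) : ℤ) * (2 ^ d * T) := by
      push_cast
      ring
    have : F (x + 2 ^ (d + 1)) =
        F x * psi (2 ^ (d + 4)) (2 ^ (d + 3) * (T * (1 + 2 * (x : ℤ))))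
            * psi (2 ^ (d + 4)) (((2 ^ (d + 4) : ℕ) : ℤ) * (2 ^ d * T)) := by
      rw [hFdef]
      simp only [← psi_add]
      congr 1
    rw [this, psi_k_mul, mul_one]
    have hsplit : (d + 4) = (d + 3) + 1 := by omega
    rw [hsplit, psi_pow (d + 3) 1]
    have h21 : (2:ℕ) ^ 1 = 2 := by norm_num
    have hodd : Odd (T * (1 + 2 * (x:ℤ))) := hT.mul ⟨(x:ℤ), by ring⟩
    rw [h21, psi_two_odd hodd]
    ring
  have hsz : (2:ℕ) ^ (d + 3) = 2 ^ (d + 1) * 4 := by rw [pow_add, pow_add]; ring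
  rw [hsz, sum_range_mul']
  rw [Finset.sum_range_succ, Finset.sum_range_succ, Finset.sum_range_succ,
    Finset.sum_range_one]
  have k0 : ∀ s : ℕ, F (s + 2 ^ (d+1) * 0) = F s := by intro s; norm_num
  have k1 : ∀ s : ℕ, F (s + 2 ^ (d+1) * 1) = -F s := by
    intro s; rw [mul_one]; exact key s
  have k2 : ∀ s : ℕ, F (s + 2 ^ (d+1) * 2) = F s := by
    intro s
    have : s + 2 ^ (d+1) * 2 = (s + 2 ^ (d+1)) + 2 ^ (d+1) := by ring
    rw [this, key, key]; ring
  have k3 : ∀ s : ℕ, F (s + 2 ^ (d+1) * 3) = -F s := by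
    intro s
    have : s + 2 ^ (d+1) * 3 = (s + 2 ^ (d+1) * 2) + 2 ^ (d+1) := by ring
    rw [this, key, k2]
  rw [Finset.sum_congr rfl fun s _ => k0 s, Finset.sum_congr rfl fun s _ => k1 s,
    Finset.sum_congr rfl fun s _ => k2 s, Finset.sum_congr rfl fun s _ => k3 s]
  rw [Finset.sum_neg_distrib]
  ring

lemma sum_range_two_mul (n K : ℕ) (h : n = 2 * K) (F : ℕ → ℂ) :
    ∑ x ∈ range n, F x = (∑ t ∈ range K, F (2 * t)) + ∑ t ∈ range K, F (1 + 2 * t) := by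
  subst h
  rw [sum_range_mul' F 2 K]
  rw [← Finset.sum_add_distrib]
  apply Finset.sum_congr rfl
  intro t _
  rw [Finset.sum_range_succ, Finset.sum_range_one]
  norm_num

lemma gsum_doubling (d : ℕ) (T : ℤ) (hT : Odd T) :
    Gsum T (2 ^ (d + 4)) = 2 * Gsum T (2 ^ (d + 2)) := by
  rw [gsum_def]
  rw [sum_range_two_mul (2 ^ (d + 4)) (2 ^ (d + 3)) (by ring) _]
  have heven : ∀ t : ℕ, psi (2 ^ (d + 4)) (T * ((2 * t : ℕ) : ℤ) ^ 2)
      = psi (2 ^ (d + 2)) (T * (t : ℤ) ^ 2) := by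
    intro t
    have e1 : T * ((2 * t : ℕ) : ℤ) ^ 2 = 2 ^ 2 * (T * (t : ℤ) ^ 2) := by push_cast; ring
    rw [e1, show (d + 4) = 2 + (d + 2) from by omega, psi_pow]
  have hodd : ∀ t : ℕ, psi (2 ^ (d + 4)) (T * ((1 + 2 * t : ℕ) : ℤ) ^ 2)
      = psi (2 ^ (d + 4)) (T * (1 + 2 * (t : ℤ)) ^ 2) := by
    intro t
    norm_cast
  rw [Finset.sum_congr rfl fun t _ => heven t, Finset.sum_congr rfl fun t _ => hodd t]
  rw [show (2:ℕ)^(d+3) = 2^(d+2) * 2 from by ring] 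
  rw [sum_range_period _ _ _ (by
    intro x
    apply psi_congr_dvd
    exact ⟨T * (2 * x + 2 ^ (d + 2)), by push_cast; ring⟩)]
  rw [show (2:ℕ)^(d+2) * 2 = 2^(d+3) from by ring, sum_odd_sq_zero d T hT]
  rw [gsum_def]
  ring

lemma gsum_doubling_iter (d j : ℕ) (T : ℤ) (hT : Odd T) :
    Gsum T (2 ^ (d + 4 + 2 * j)) = 2 ^ j * Gsum T (2 ^ (d + 4)) := by
  induction j with
  | zero => simp
  | succ j ih =>
      have h := gsum_doubling (d + 2 * j + 2) T hT
      rw [show d + 4 + 2 * (j + 1) = (d + 2 * j + 2) + 4 from by omega, h,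
        show (d + 2 * j + 2) + 2 = d + 4 + 2 * j from by omega, ih]
      ring


lemma gsum2_def (a b c S : ℤ) (k : ℕ) : Gsum2 a b c S k =
    ∑ x ∈ range k, ∑ y ∈ range k,
      psi k (S * (a * (x : ℤ) ^ 2 + b * (x : ℤ) * (y : ℤ) + c * (y : ℤ) ^ 2)) := rfl

set_option maxHeartbeats 2000000 in
lemma step3 (d : ℕ) (S A b c : ℤ) (hS : Odd S) (hA : Odd A) :
    Gsum2 A b c S (2 ^ (d + 2)) =
      (1 / 4 : ℂ) * Gsum (S * A) (2 ^ (d + 2)) *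
        Gsum (S * A * (4 * A * c - b ^ 2)) (2 ^ (d + 4)) := by
  obtain ⟨A', hA'0⟩ := exists_int_inv (d + 4) hA
  have hcastM : (((2:ℕ) ^ (d + 4) : ℕ) : ℤ) = (2:ℤ) ^ (d + 4) := by push_cast; ring
  have hcastk : (((2:ℕ) ^ (d + 2) : ℕ) : ℤ) = (2:ℤ) ^ (d + 2) := by push_cast; ring
  have hA'c : A * A' ≡ 1 [ZMOD (((2:ℕ) ^ (d + 4) : ℕ) : ℤ)] := by rw [hcastM]; exact hA'0
  have hdvdkM : (((2:ℕ) ^ (d + 2) : ℕ) : ℤ) ∣ (((2:ℕ) ^ (d + 4) : ℕ) : ℤ) := by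
    rw [hcastM, hcastk]; exact pow_dvd_pow 2 (by omega)
  have hA'k : A * A' ≡ 1 [ZMOD (((2:ℕ) ^ (d + 2) : ℕ) : ℤ)] := hA'c.of_dvd hdvdkM
  have hA'odd : Odd A' := by
    have h2 : (2:ℤ) ∣ (1 - A * A') := by
      have := Int.ModEq.dvd hA'0
      exact dvd_trans ⟨2 ^ (d + 3), by ring⟩ this
    rcases Int.even_or_odd (A * A') with he | ho
    · exfalso
      obtain ⟨t, ht⟩ := he
      obtain ⟨u, hu⟩ := h2
      omega
    · exact (Int.odd_mul.mp ho).2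
  have hMpos : 0 < (2:ℕ) ^ (d + 4) := pow_pos (by norm_num) _
  have hkpos : 0 < (2:ℕ) ^ (d + 2) := pow_pos (by norm_num) _
  obtain ⟨w, hw⟩ := exists_nat_rep (2 ^ (d + 4)) hMpos A'
  obtain ⟨w2, hw2⟩ := exists_nat_rep (2 ^ (d + 4)) hMpos A
  have hww : w * w2 ≡ 1 [MOD 2 ^ (d + 4)] := by
    apply natModEq_of_int
    have : ((w:ℤ) * (w2:ℤ)) ≡ A' * A [ZMOD (((2:ℕ) ^ (d + 4) : ℕ) : ℤ)] := hw.mul hw2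
    calc ((w * w2 : ℕ) : ℤ) = (w:ℤ) * (w2:ℤ) := by push_cast; ring
      _ ≡ A' * A [ZMOD _] := this
      _ = A * A' := by ring
      _ ≡ ((1:ℕ):ℤ) [ZMOD (((2:ℕ) ^ (d + 4) : ℕ) : ℤ)] := by
          simpa using hA'c
  have hw2w : w2 * w ≡ 1 [MOD 2 ^ (d + 4)] := by
    have : w2 * w = w * w2 := by ring
    rw [this]; exact hww
  -- Part A: extend inner y-sum to modulus 2^(d+4)
  have hA1 : ∀ x : ℕ,
      (∑ y ∈ range (2 ^ (d + 2)),
        psi (2 ^ (d + 2)) (S * (A * (x:ℤ) ^ 2 + b * (x:ℤ) * (y:ℤ) + c * (y:ℤ) ^ 2)))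
      = (4 : ℂ)⁻¹ * ∑ y ∈ range (2 ^ (d + 4)),
          psi (2 ^ (d + 2)) (S * (A * (x:ℤ) ^ 2 + b * (x:ℤ) * (y:ℤ) + c * (y:ℤ) ^ 2)) := by
    intro x
    have hper : ∀ y : ℕ,
        psi (2 ^ (d + 2)) (S * (A * (x:ℤ) ^ 2 + b * (x:ℤ) * ((y + 2 ^ (d + 2) : ℕ):ℤ)
          + c * ((y + 2 ^ (d + 2) : ℕ):ℤ) ^ 2))
        = psi (2 ^ (d + 2)) (S * (A * (x:ℤ) ^ 2 + b * (x:ℤ) * (y:ℤ) + c * (y:ℤ) ^ 2)) := by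
      intro y
      exact psi_congr_dvd ⟨S * (b * (x:ℤ) + c * (2 * (y:ℤ) + 2 ^ (d + 2))), by push_cast; ring⟩
    have hp := sum_range_period
      (fun y : ℕ => psi (2 ^ (d + 2)) (S * (A * (x:ℤ) ^ 2 + b * (x:ℤ) * (y:ℤ) + c * (y:ℤ) ^ 2)))
      (2 ^ (d + 2)) 4 hper
    rw [show (2:ℕ) ^ (d + 4) = 2 ^ (d + 2) * 4 from by ring, hp]
    push_cast
    ring
  -- Part B: pointwise completion of the square
  have hpoint : ∀ x y : ℕ,
      psi (2 ^ (d + 2)) (S * (A * (x:ℤ) ^ 2 + b * (x:ℤ) * (y:ℤ) + c * (y:ℤ) ^ 2))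
      = psi (2 ^ (d + 4)) (S * A' * (2 * A * (x:ℤ) + b * (y:ℤ)) ^ 2)
        * psi (2 ^ (d + 4)) (S * A' * (4 * A * c - b ^ 2) * (y:ℤ) ^ 2) := by
    intro x y
    have hp := psi_pow 2 (d + 2) (S * (A * (x:ℤ) ^ 2 + b * (x:ℤ) * (y:ℤ) + c * (y:ℤ) ^ 2))
    rw [show 2 + (d + 2) = d + 4 from by omega] at hp
    have l1 : psi (2 ^ (d + 2)) (S * (A * (x:ℤ) ^ 2 + b * (x:ℤ) * (y:ℤ) + c * (y:ℤ) ^ 2))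
        = psi (2 ^ (d + 4)) (4 * (S * (A * (x:ℤ) ^ 2 + b * (x:ℤ) * (y:ℤ) + c * (y:ℤ) ^ 2))) := by
      rw [← hp]
      norm_num
    have l2 : psi (2 ^ (d + 4)) (4 * (S * (A * (x:ℤ) ^ 2 + b * (x:ℤ) * (y:ℤ) + c * (y:ℤ) ^ 2)))
        = psi (2 ^ (d + 4)) (S * A' * (2 * A * (x:ℤ) + b * (y:ℤ)) ^ 2
            + S * A' * (4 * A * c - b ^ 2) * (y:ℤ) ^ 2) := by
      apply psi_congr
      have h1 := hA'c.mul_left (4 * (S * (A * (x:ℤ) ^ 2 + b * (x:ℤ) * (y:ℤ) + c * (y:ℤ) ^ 2)))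
      rw [mul_one] at h1
      have h2 : S * A' * (2 * A * (x:ℤ) + b * (y:ℤ)) ^ 2
            + S * A' * (4 * A * c - b ^ 2) * (y:ℤ) ^ 2
          = 4 * (S * (A * (x:ℤ) ^ 2 + b * (x:ℤ) * (y:ℤ) + c * (y:ℤ) ^ 2)) * (A * A') := by
        ring
      rw [h2]
      exact h1.symm
    rw [l1, l2, psi_add]
  -- reduce the goal to a single sum over y
  have hmain : Gsum2 A b c S (2 ^ (d + 2))
      = (4:ℂ)⁻¹ * ∑ y ∈ range (2 ^ (d + 4)),
          (∑ x ∈ range (2 ^ (d + 2)), psi (2 ^ (d + 4)) (S * A' * (2 * A * (x:ℤ) + b * (y:ℤ)) ^ 2))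
            * psi (2 ^ (d + 4)) (S * A' * (4 * A * c - b ^ 2) * (y:ℤ) ^ 2) := by
    rw [gsum2_def]
    rw [Finset.sum_congr rfl fun x _ => hA1 x, ← Finset.mul_sum]
    congr 1
    rw [Finset.sum_comm]
    apply Finset.sum_congr rfl
    intro y _
    rw [Finset.sum_mul]
    apply Finset.sum_congr rfl
    intro x _
    exact hpoint x y
  -- Part C: evaluate the inner x-sum
  have hJ : ∀ y : ℕ,
      (∑ x ∈ range (2 ^ (d + 2)), psi (2 ^ (d + 4)) (S * A' * (2 * A * (x:ℤ) + b * (y:ℤ)) ^ 2))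
      = (2:ℂ)⁻¹ * ∑ s ∈ range (2 ^ (d + 3)),
          psi (2 ^ (d + 4)) (S * A' * (b * (y:ℤ) + 2 * (s:ℤ)) ^ 2) := by
    intro y
    have hper : ∀ x : ℕ,
        psi (2 ^ (d + 4)) (S * A' * (2 * A * ((x + 2 ^ (d + 2) : ℕ):ℤ) + b * (y:ℤ)) ^ 2)
        = psi (2 ^ (d + 4)) (S * A' * (2 * A * (x:ℤ) + b * (y:ℤ)) ^ 2) := by
      intro x
      exact psi_congr_dvd
        ⟨S * A' * ((2 * A * (x:ℤ) + b * (y:ℤ)) * A + A ^ 2 * 2 ^ (d + 2)), by push_cast; ring⟩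
    have hext := sum_range_period'
      (fun x : ℕ => psi (2 ^ (d + 4)) (S * A' * (2 * A * (x:ℤ) + b * (y:ℤ)) ^ 2))
      (2 ^ (d + 4)) (2 ^ (d + 2)) 4 (by ring) hper
    have hsub := sum_range_unit (2 ^ (d + 4)) w w2 hMpos hww
      (fun x : ℕ => psi (2 ^ (d + 4)) (S * A' * (2 * A * (x:ℤ) + b * (y:ℤ)) ^ 2))
    have hpt : ∀ x : ℕ,
        psi (2 ^ (d + 4)) (S * A' * (2 * A * (((w * x) % 2 ^ (d + 4) : ℕ):ℤ) + b * (y:ℤ)) ^ 2)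
        = psi (2 ^ (d + 4)) (S * A' * (2 * (x:ℤ) + b * (y:ℤ)) ^ 2) := by
      intro x
      apply psi_congr
      have hc1 : (((w * x) % 2 ^ (d + 4) : ℕ):ℤ) ≡ (w:ℤ) * (x:ℤ) [ZMOD (((2:ℕ) ^ (d+4) : ℕ):ℤ)] := by
        push_cast
        exact Int.emod_emod_of_dvd _ dvd_rfl
      have hc2 : (((w * x) % 2 ^ (d + 4) : ℕ):ℤ) ≡ A' * (x:ℤ) [ZMOD (((2:ℕ) ^ (d+4) : ℕ):ℤ)] :=
        hc1.trans (hw.mul_right _)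
      obtain ⟨t, ht⟩ := Int.ModEq.dvd hA'c
      have hc3 : 2 * A * (A' * (x:ℤ)) + b * (y:ℤ) ≡ 2 * (x:ℤ) + b * (y:ℤ)
          [ZMOD (((2:ℕ) ^ (d+4) : ℕ):ℤ)] := by
        rw [Int.modEq_iff_dvd]
        exact ⟨2 * (x:ℤ) * t, by push_cast at ht ⊢; linear_combination (2*(x:ℤ)) * ht⟩
      have hc4 := ((hc2.mul_left (2 * A)).add_right (b * (y:ℤ))).trans hc3
      exact (hc4.pow 2).mul_left (S * A')
    have hper2 : ∀ x : ℕ,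
        psi (2 ^ (d + 4)) (S * A' * (2 * ((x + 2 ^ (d + 3) : ℕ):ℤ) + b * (y:ℤ)) ^ 2)
        = psi (2 ^ (d + 4)) (S * A' * (2 * (x:ℤ) + b * (y:ℤ)) ^ 2) := by
      intro x
      exact psi_congr_dvd
        ⟨S * A' * (2 * (2 * (x:ℤ) + b * (y:ℤ)) + 2 ^ (d + 4)), by push_cast; ring⟩
    have hhalf := sum_range_period'
      (fun x : ℕ => psi (2 ^ (d + 4)) (S * A' * (2 * (x:ℤ) + b * (y:ℤ)) ^ 2))
      (2 ^ (d + 4)) (2 ^ (d + 3)) 2 (by ring) hper2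
    calc (∑ x ∈ range (2 ^ (d + 2)), psi (2 ^ (d + 4)) (S * A' * (2 * A * (x:ℤ) + b * (y:ℤ)) ^ 2))
        = (4:ℂ)⁻¹ * ∑ x ∈ range (2 ^ (d + 4)),
            psi (2 ^ (d + 4)) (S * A' * (2 * A * (x:ℤ) + b * (y:ℤ)) ^ 2) := by
          rw [hext]
          push_cast
          ring
      _ = (4:ℂ)⁻¹ * ∑ x ∈ range (2 ^ (d + 4)),
            psi (2 ^ (d + 4)) (S * A' * (2 * (x:ℤ) + b * (y:ℤ)) ^ 2) := by
          rw [← hsub]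
          congr 1
          exact Finset.sum_congr rfl fun x _ => hpt x
      _ = (4:ℂ)⁻¹ * (2 * ∑ x ∈ range (2 ^ (d + 3)),
            psi (2 ^ (d + 4)) (S * A' * (2 * (x:ℤ) + b * (y:ℤ)) ^ 2)) := by
          rw [hhalf]
          push_cast
          ring
      _ = (2:ℂ)⁻¹ * ∑ s ∈ range (2 ^ (d + 3)),
            psi (2 ^ (d + 4)) (S * A' * (b * (y:ℤ) + 2 * (s:ℤ)) ^ 2) := by
          rw [Finset.sum_congr rfl fun (s : ℕ) _ =>
            congrArg (psi (2 ^ (d + 4)))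
              (by ring : S * A' * (2 * (s:ℤ) + b * (y:ℤ)) ^ 2
                = S * A' * (b * (y:ℤ) + 2 * (s:ℤ)) ^ 2)]
          ring
  have hmain2 : Gsum2 A b c S (2 ^ (d + 2))
      = (8:ℂ)⁻¹ * ∑ y ∈ range (2 ^ (d + 4)),
          (∑ s ∈ range (2 ^ (d + 3)), psi (2 ^ (d + 4)) (S * A' * (b * (y:ℤ) + 2 * (s:ℤ)) ^ 2))
            * psi (2 ^ (d + 4)) (S * A' * (4 * A * c - b ^ 2) * (y:ℤ) ^ 2) := by
    rw [hmain]
    rw [Finset.sum_congr rfl fun (y : ℕ) _ => show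
      (∑ x ∈ range (2 ^ (d + 2)), psi (2 ^ (d + 4)) (S * A' * (2 * A * (x:ℤ) + b * (y:ℤ)) ^ 2))
        * psi (2 ^ (d + 4)) (S * A' * (4 * A * c - b ^ 2) * (y:ℤ) ^ 2)
      = (2:ℂ)⁻¹ * ((∑ s ∈ range (2 ^ (d + 3)),
            psi (2 ^ (d + 4)) (S * A' * (b * (y:ℤ) + 2 * (s:ℤ)) ^ 2))
          * psi (2 ^ (d + 4)) (S * A' * (4 * A * c - b ^ 2) * (y:ℤ) ^ 2)) from by
        rw [hJ y]; ring]
    rw [← Finset.mul_sum]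
    ring
  -- Part D: properties of the inner "W" sums
  have hW2 : ∀ u : ℤ,
      (∑ s ∈ range (2 ^ (d + 3)), psi (2 ^ (d + 4)) (S * A' * ((u + 2) + 2 * (s:ℤ)) ^ 2))
      = ∑ s ∈ range (2 ^ (d + 3)), psi (2 ^ (d + 4)) (S * A' * (u + 2 * (s:ℤ)) ^ 2) := by
    intro u
    have hper : ∀ s : ℕ,
        psi (2 ^ (d + 4)) (S * A' * (u + 2 * ((s + 2 ^ (d + 3) : ℕ):ℤ)) ^ 2)
        = psi (2 ^ (d + 4)) (S * A' * (u + 2 * (s:ℤ)) ^ 2) := fun s =>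
      psi_congr_dvd ⟨S * A' * (2 * (u + 2 * (s:ℤ)) + 2 ^ (d + 4)), by push_cast; ring⟩
    have hshift := sum_range_shift_one
      (fun s : ℕ => psi (2 ^ (d + 4)) (S * A' * (u + 2 * (s:ℤ)) ^ 2)) (2 ^ (d + 3)) hper
    rw [← hshift]
    exact Finset.sum_congr rfl fun s _ =>
      congrArg (psi (2 ^ (d + 4))) (by push_cast; ring)
  have hWmod : ∀ u : ℤ,
      (∑ s ∈ range (2 ^ (d + 3)), psi (2 ^ (d + 4)) (S * A' * (u + 2 * (s:ℤ)) ^ 2))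
      = ∑ s ∈ range (2 ^ (d + 3)), psi (2 ^ (d + 4)) (S * A' * ((u % 2) + 2 * (s:ℤ)) ^ 2) := by
    intro u
    set Wf : ℤ → ℂ := fun v =>
      ∑ s ∈ range (2 ^ (d + 3)), psi (2 ^ (d + 4)) (S * A' * (v + 2 * (s:ℤ)) ^ 2) with hWf
    have h2 : ∀ v : ℤ, Wf (v + 2) = Wf v := hW2
    have hall : ∀ t : ℤ, ∀ v : ℤ, Wf (v + 2 * t) = Wf v := by
      intro t
      induction t using Int.induction_on with
      | zero => intro v; norm_num
      | succ i ih =>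
          intro v
          have e : v + 2 * ((i:ℤ) + 1) = (v + 2 * i) + 2 := by ring
          rw [e, h2, ih]
      | pred i ih =>
          intro v
          have e : v + 2 * (-(i:ℤ) - 1) = (v + 2 * (-(i:ℤ))) - 2 := by ring
          have h2' := h2 (v + 2 * (-(i:ℤ)) - 2)
          rw [show v + 2 * (-(i:ℤ)) - 2 + 2 = v + 2 * (-(i:ℤ)) from by ring] at h2'
          rw [e, ← h2', ih]
    have e : u = u % 2 + 2 * (u / 2) := by
      rw [Int.emod_add_mul_ediv]
    calc Wf u = Wf (u % 2 + 2 * (u / 2)) := by rw [← e]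
      _ = Wf (u % 2) := hall (u / 2) (u % 2)
  have hW1 : (∑ s ∈ range (2 ^ (d + 3)),
      psi (2 ^ (d + 4)) (S * A' * ((1:ℤ) + 2 * (s:ℤ)) ^ 2)) = 0 := by
    exact sum_odd_sq_zero d (S * A') (hS.mul hA'odd)
  have hGk : Gsum (S * A') (2 ^ (d + 2)) = Gsum (S * A) (2 ^ (d + 2)) := by
    have hww_k : w2 * w ≡ 1 [MOD 2 ^ (d + 2)] :=
      Nat.ModEq.of_dvd (pow_dvd_pow 2 (by omega)) hw2w
    have h1 := gsum_mul_sq (2 ^ (d + 2)) hkpos (S * A') w2 w hww_k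
    rw [← h1]
    apply gsum_congr
    have hw2k : (w2:ℤ) ≡ A [ZMOD (((2:ℕ) ^ (d + 2) : ℕ):ℤ)] := hw2.of_dvd hdvdkM
    calc S * A' * (w2:ℤ) ^ 2 ≡ S * A' * A ^ 2 [ZMOD (((2:ℕ) ^ (d + 2) : ℕ):ℤ)] :=
          (hw2k.pow 2).mul_left (S * A')
      _ = (S * A) * (A * A') := by ring
      _ ≡ (S * A) * 1 [ZMOD (((2:ℕ) ^ (d + 2) : ℕ):ℤ)] := hA'k.mul_left (S * A)
      _ = S * A := by ring
  have hGDk : Gsum (S * A' * (4 * A * c - b ^ 2)) (2 ^ (d + 2))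
      = Gsum (S * A * (4 * A * c - b ^ 2)) (2 ^ (d + 2)) := by
    have hww_k : w2 * w ≡ 1 [MOD 2 ^ (d + 2)] :=
      Nat.ModEq.of_dvd (pow_dvd_pow 2 (by omega)) hw2w
    have h1 := gsum_mul_sq (2 ^ (d + 2)) hkpos (S * A' * (4 * A * c - b ^ 2)) w2 w hww_k
    rw [← h1]
    apply gsum_congr
    have hw2k : (w2:ℤ) ≡ A [ZMOD (((2:ℕ) ^ (d + 2) : ℕ):ℤ)] := hw2.of_dvd hdvdkM
    calc S * A' * (4 * A * c - b ^ 2) * (w2:ℤ) ^ 2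
          ≡ S * A' * (4 * A * c - b ^ 2) * A ^ 2 [ZMOD (((2:ℕ) ^ (d + 2) : ℕ):ℤ)] :=
          (hw2k.pow 2).mul_left _
      _ = (S * A * (4 * A * c - b ^ 2)) * (A * A') := by ring
      _ ≡ (S * A * (4 * A * c - b ^ 2)) * 1 [ZMOD (((2:ℕ) ^ (d + 2) : ℕ):ℤ)] :=
          hA'k.mul_left _
      _ = S * A * (4 * A * c - b ^ 2) := by ring
  have hGDM : Gsum (S * A' * (4 * A * c - b ^ 2)) (2 ^ (d + 4))
      = Gsum (S * A * (4 * A * c - b ^ 2)) (2 ^ (d + 4)) := by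
    have h1 := gsum_mul_sq (2 ^ (d + 4)) hMpos (S * A' * (4 * A * c - b ^ 2)) w2 w hw2w
    rw [← h1]
    apply gsum_congr
    calc S * A' * (4 * A * c - b ^ 2) * (w2:ℤ) ^ 2
          ≡ S * A' * (4 * A * c - b ^ 2) * A ^ 2 [ZMOD (((2:ℕ) ^ (d + 4) : ℕ):ℤ)] :=
          (hw2.pow 2).mul_left _
      _ = (S * A * (4 * A * c - b ^ 2)) * (A * A') := by ring
      _ ≡ (S * A * (4 * A * c - b ^ 2)) * 1 [ZMOD (((2:ℕ) ^ (d + 4) : ℕ):ℤ)] :=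
          hA'c.mul_left _
      _ = S * A * (4 * A * c - b ^ 2) := by ring
  have hW0 : (∑ s ∈ range (2 ^ (d + 3)),
      psi (2 ^ (d + 4)) (S * A' * ((0:ℤ) + 2 * (s:ℤ)) ^ 2)) = 2 * Gsum (S * A) (2 ^ (d + 2)) := by
    have hpt0 : ∀ s : ℕ, psi (2 ^ (d + 4)) (S * A' * ((0:ℤ) + 2 * (s:ℤ)) ^ 2)
        = psi (2 ^ (d + 2)) (S * A' * (s:ℤ) ^ 2) := by
      intro s
      have hp := psi_pow 2 (d + 2) (S * A' * (s:ℤ) ^ 2)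
      rw [show 2 + (d + 2) = d + 4 from by omega] at hp
      rw [← hp]
      exact congrArg _ (by ring)
    rw [Finset.sum_congr rfl fun s _ => hpt0 s]
    have hper : ∀ s : ℕ, psi (2 ^ (d + 2)) (S * A' * ((s + 2 ^ (d + 2) : ℕ):ℤ) ^ 2)
        = psi (2 ^ (d + 2)) (S * A' * (s:ℤ) ^ 2) := fun s =>
      psi_congr_dvd ⟨S * A' * (2 * (s:ℤ) + 2 ^ (d + 2)), by push_cast; ring⟩
    have hp2 := sum_range_period' (fun s : ℕ => psi (2 ^ (d + 2)) (S * A' * (s:ℤ) ^ 2))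
      (2 ^ (d + 3)) (2 ^ (d + 2)) 2 (by ring) hper
    rw [hp2, ← gsum_def, hGk]
    push_cast
    ring
  -- Part E: final case analysis on the parity of b
  rcases Int.even_or_odd b with hbe | hbo
  · -- b even
    have hconst : ∀ y : ℕ,
        (∑ s ∈ range (2 ^ (d + 3)), psi (2 ^ (d + 4)) (S * A' * (b * (y:ℤ) + 2 * (s:ℤ)) ^ 2))
        = 2 * Gsum (S * A) (2 ^ (d + 2)) := by
      intro y
      have h0 : (b * (y:ℤ)) % 2 = 0 :=
        Int.emod_eq_zero_of_dvd ((even_iff_two_dvd.mp hbe).mul_right _)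
      rw [hWmod (b * (y:ℤ)), h0]
      exact hW0
    rw [hmain2]
    rw [Finset.sum_congr rfl fun (y : ℕ) _ => by rw [hconst y]]
    rw [← Finset.mul_sum, ← gsum_def, hGDM]
    ring
  · -- b odd
    have hDodd : Odd (4 * A * c - b ^ 2) := by
      have he : Even (4 * A * c) := ⟨2 * A * c, by ring⟩
      exact he.sub_odd (hbo.pow)
    have hTodd : Odd (S * A * (4 * A * c - b ^ 2)) := (hS.mul hA).mul hDodd
    have hdb := gsum_doubling d (S * A * (4 * A * c - b ^ 2)) hTodd
    have hsplit := sum_range_two_mul (2 ^ (d + 4)) (2 ^ (d + 3)) (by ring)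
      (fun y : ℕ =>
        (∑ s ∈ range (2 ^ (d + 3)), psi (2 ^ (d + 4)) (S * A' * (b * (y:ℤ) + 2 * (s:ℤ)) ^ 2))
          * psi (2 ^ (d + 4)) (S * A' * (4 * A * c - b ^ 2) * (y:ℤ) ^ 2))
    have hEv : ∀ t : ℕ,
        (∑ s ∈ range (2 ^ (d + 3)),
            psi (2 ^ (d + 4)) (S * A' * (b * ((2 * t : ℕ):ℤ) + 2 * (s:ℤ)) ^ 2))
          * psi (2 ^ (d + 4)) (S * A' * (4 * A * c - b ^ 2) * ((2 * t : ℕ):ℤ) ^ 2)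
        = (2 * Gsum (S * A) (2 ^ (d + 2)))
          * psi (2 ^ (d + 2)) (S * A' * (4 * A * c - b ^ 2) * (t:ℤ) ^ 2) := by
      intro t
      have hc : ((2 * t : ℕ):ℤ) = 2 * (t:ℤ) := by push_cast; ring
      rw [hc]
      have h0 : (b * (2 * (t:ℤ))) % 2 = 0 := by
        apply Int.emod_eq_zero_of_dvd
        exact ⟨b * t, by ring⟩
      rw [hWmod (b * (2 * (t:ℤ))), h0, hW0]
      congr 1
      have hp := psi_pow 2 (d + 2) (S * A' * (4 * A * c - b ^ 2) * (t:ℤ) ^ 2)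
      rw [show 2 + (d + 2) = d + 4 from by omega] at hp
      rw [← hp]
      exact congrArg _ (by ring)
    have hOd : ∀ t : ℕ,
        (∑ s ∈ range (2 ^ (d + 3)),
            psi (2 ^ (d + 4)) (S * A' * (b * ((1 + 2 * t : ℕ):ℤ) + 2 * (s:ℤ)) ^ 2))
          * psi (2 ^ (d + 4)) (S * A' * (4 * A * c - b ^ 2) * ((1 + 2 * t : ℕ):ℤ) ^ 2)
        = 0 := by
      intro t
      have hc : ((1 + 2 * t : ℕ):ℤ) = 1 + 2 * (t:ℤ) := by push_cast; ring
      rw [hc]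
      have h1 : (b * (1 + 2 * (t:ℤ))) % 2 = 1 := by
        apply Int.odd_iff.mp
        exact hbo.mul ⟨(t:ℤ), by ring⟩
      rw [hWmod (b * (1 + 2 * (t:ℤ))), h1, hW1, zero_mul]
    have hper : ∀ t : ℕ,
        psi (2 ^ (d + 2)) (S * A' * (4 * A * c - b ^ 2) * ((t + 2 ^ (d + 2) : ℕ):ℤ) ^ 2)
        = psi (2 ^ (d + 2)) (S * A' * (4 * A * c - b ^ 2) * (t:ℤ) ^ 2) := fun t =>
      psi_congr_dvd ⟨S * A' * (4 * A * c - b ^ 2) * (2 * (t:ℤ) + 2 ^ (d + 2)),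
        by push_cast; ring⟩
    have hp2 := sum_range_period'
      (fun t : ℕ => psi (2 ^ (d + 2)) (S * A' * (4 * A * c - b ^ 2) * (t:ℤ) ^ 2))
      (2 ^ (d + 3)) (2 ^ (d + 2)) 2 (by ring) hper
    rw [hmain2, hsplit]
    rw [Finset.sum_congr rfl fun (t : ℕ) _ => hEv t,
      Finset.sum_congr rfl fun (t : ℕ) _ => hOd t]
    rw [Finset.sum_const, ← Finset.mul_sum, hp2, ← gsum_def, hGDk, hdb]
    push_cast
    ring

set_option maxHeartbeats 2000000 in
lemma step2 (m α : ℕ) (S A b c : ℤ) (hS : Odd S)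
    (hcond : ∀ y : ℕ, ((((2:ℕ)^α : ℕ):ℤ) ∣ S * b * (y:ℤ)) ↔ ((2:ℕ)^α ∣ y)) :
    Gsum2 ((2:ℤ) ^ α * A) b c S (2 ^ (α + m))
      = (2:ℂ) ^ α * Gsum2 A b ((2:ℤ) ^ α * c) S (2 ^ m) := by
  have hαpos : 0 < (2:ℕ)^α := pow_pos (by norm_num) _
  rw [gsum2_def, gsum2_def, Finset.sum_comm]
  -- evaluate the inner x-sum for each y
  have hx : ∀ y : ℕ,
      (∑ x ∈ range (2 ^ (α + m)),
        psi (2 ^ (α + m)) (S * ((2:ℤ) ^ α * A * (x:ℤ) ^ 2 + b * (x:ℤ) * (y:ℤ) + c * (y:ℤ) ^ 2)))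
      = (if (((2:ℕ)^α : ℕ):ℤ) ∣ S * b * (y:ℤ) then (((2:ℕ)^α : ℕ):ℂ) else 0)
        * ∑ s ∈ range (2 ^ m),
            psi (2 ^ (α + m)) (S * ((2:ℤ) ^ α * A * (s:ℤ) ^ 2 + b * (s:ℤ) * (y:ℤ) + c * (y:ℤ) ^ 2)) := by
    intro y
    have hsplit := sum_range_mul''
      (fun x : ℕ => psi (2 ^ (α + m))
        (S * ((2:ℤ) ^ α * A * (x:ℤ) ^ 2 + b * (x:ℤ) * (y:ℤ) + c * (y:ℤ) ^ 2)))
      (2 ^ (α + m)) (2 ^ m) (2 ^ α) (by rw [pow_add]; ring)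
    have hpt : ∀ t s : ℕ,
        psi (2 ^ (α + m)) (S * ((2:ℤ) ^ α * A * ((s + 2 ^ m * t : ℕ):ℤ) ^ 2
          + b * ((s + 2 ^ m * t : ℕ):ℤ) * (y:ℤ) + c * (y:ℤ) ^ 2))
        = psi (2 ^ (α + m)) (S * ((2:ℤ) ^ α * A * (s:ℤ) ^ 2 + b * (s:ℤ) * (y:ℤ) + c * (y:ℤ) ^ 2))
          * psi (2 ^ α) ((S * b * (y:ℤ)) * (t:ℤ)) := by
      intro t s
      have harg : S * ((2:ℤ) ^ α * A * ((s + 2 ^ m * t : ℕ):ℤ) ^ 2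
            + b * ((s + 2 ^ m * t : ℕ):ℤ) * (y:ℤ) + c * (y:ℤ) ^ 2)
          = (S * ((2:ℤ) ^ α * A * (s:ℤ) ^ 2 + b * (s:ℤ) * (y:ℤ) + c * (y:ℤ) ^ 2)
              + 2 ^ m * ((S * b * (y:ℤ)) * (t:ℤ)))
            + (((2:ℕ) ^ (α + m) : ℕ):ℤ) * (S * (2 * A * (s:ℤ) * (t:ℤ) + 2 ^ m * A * (t:ℤ) ^ 2)) := by
        push_cast
        ring
      rw [harg, psi_add, psi_k_mul, mul_one, psi_add]
      congr 1
      have hp := psi_pow m α ((S * b * (y:ℤ)) * (t:ℤ))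
      rw [show m + α = α + m from by omega] at hp
      exact hp
    rw [hsplit]
    rw [Finset.sum_congr rfl fun (t : ℕ) _ => Finset.sum_congr rfl fun (s : ℕ) _ => hpt t s]
    rw [Finset.sum_congr rfl fun (t : ℕ) _ =>
      (Finset.sum_mul (range (2 ^ m))
        (fun s => psi (2 ^ (α + m))
          (S * ((2:ℤ) ^ α * A * (s:ℤ) ^ 2 + b * (s:ℤ) * (y:ℤ) + c * (y:ℤ) ^ 2)))
        (psi (2 ^ α) ((S * b * (y:ℤ)) * (t:ℤ)))).symm]
    rw [← Finset.mul_sum, sum_psi_geom (2 ^ α) hαpos (S * b * (y:ℤ))]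
    ring
  rw [Finset.sum_congr rfl fun (y : ℕ) _ => hx y]
  -- rewrite the if-condition using hcond
  have hif : ∀ y : ℕ,
      (if (((2:ℕ)^α : ℕ):ℤ) ∣ S * b * (y:ℤ) then (((2:ℕ)^α : ℕ):ℂ) else 0)
      = if (2:ℕ)^α ∣ y then (((2:ℕ)^α : ℕ):ℂ) else 0 := by
    intro y
    by_cases h : (2:ℕ)^α ∣ y
    · rw [if_pos h, if_pos ((hcond y).mpr h)]
    · rw [if_neg h, if_neg (fun hc => h ((hcond y).mp hc))]
  rw [Finset.sum_congr rfl fun (y : ℕ) _ => by rw [hif y]]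
  -- reindex y over multiples of 2 ^ α
  have hysplit := sum_range_mul''
    (fun y : ℕ => (if (2:ℕ)^α ∣ y then (((2:ℕ)^α : ℕ):ℂ) else 0)
      * ∑ s ∈ range (2 ^ m),
          psi (2 ^ (α + m)) (S * ((2:ℤ) ^ α * A * (s:ℤ) ^ 2 + b * (s:ℤ) * (y:ℤ) + c * (y:ℤ) ^ 2)))
    (2 ^ (α + m)) (2 ^ α) (2 ^ m) (by rw [pow_add])
  rw [hysplit]
  have hinner : ∀ t : ℕ,
      (∑ r ∈ range (2 ^ α), (if (2:ℕ)^α ∣ (r + 2 ^ α * t) then (((2:ℕ)^α : ℕ):ℂ) else 0)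
        * ∑ s ∈ range (2 ^ m),
            psi (2 ^ (α + m)) (S * ((2:ℤ) ^ α * A * (s:ℤ) ^ 2
              + b * (s:ℤ) * ((r + 2 ^ α * t : ℕ):ℤ) + c * ((r + 2 ^ α * t : ℕ):ℤ) ^ 2)))
      = (((2:ℕ)^α : ℕ):ℂ) * ∑ s ∈ range (2 ^ m),
          psi (2 ^ m) (S * (A * (s:ℤ) ^ 2 + b * (s:ℤ) * (t:ℤ) + (2:ℤ) ^ α * c * (t:ℤ) ^ 2)) := by
    intro t
    rw [Finset.sum_eq_single_of_mem 0 (Finset.mem_range.mpr hαpos)]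
    · rw [if_pos ⟨t, by ring⟩]
      congr 1
      apply Finset.sum_congr rfl
      intro s _
      have harg : S * ((2:ℤ) ^ α * A * (s:ℤ) ^ 2
            + b * (s:ℤ) * ((0 + 2 ^ α * t : ℕ):ℤ) + c * ((0 + 2 ^ α * t : ℕ):ℤ) ^ 2)
          = (2:ℤ) ^ α * (S * (A * (s:ℤ) ^ 2 + b * (s:ℤ) * (t:ℤ) + (2:ℤ) ^ α * c * (t:ℤ) ^ 2)) := by
        push_cast
        ring
      rw [harg]
      exact psi_pow α m _
    · intro r hr hrne
      rw [if_neg, zero_mul]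
      intro hdvd
      have h1 : (2:ℕ)^α ∣ r := (Nat.dvd_add_right ⟨t, rfl⟩).mp (by rwa [add_comm] at hdvd)
      have h2 : r < 2^α := Finset.mem_range.mp hr
      exact hrne (Nat.eq_zero_of_dvd_of_lt h1 h2)
  rw [Finset.sum_congr rfl fun (t : ℕ) _ => hinner t]
  rw [← Finset.mul_sum, Finset.sum_comm]
  push_cast
  ring
lemma gsum2_congr_a {a a' b c S : ℤ} {k : ℕ} (h : a ≡ a' [ZMOD (k:ℤ)]) :
    Gsum2 a b c S k = Gsum2 a' b c S k := by
  rw [gsum2_def, gsum2_def]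
  refine Finset.sum_congr rfl fun x _ => Finset.sum_congr rfl fun y _ => psi_congr ?_
  exact (((h.mul_right ((x:ℤ)^2)).add_right (b*(x:ℤ)*(y:ℤ))).add_right (c*(y:ℤ)^2)).mul_left S

theorem stmt_15 (n : ℕ) (hn : 0 < n) (S a b c A : ℤ) (α : ℕ)
    (hS : Odd S) (habc : Int.gcd (Int.gcd a b) c = 1)
    (hA : Odd A) (ha : a ≡ (2 : ℤ) ^ α * A [ZMOD ((2 : ℤ) ^ n)])
    (hαn : α + 1 < n) (hc : (2 : ℤ) ^ α ∣ c) :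
    Gsum2 a b c S (2 ^ n) =
      (1 / 4 : ℂ) * Gsum (S * A) (2 ^ (n - α)) *
        Gsum (S * A * (4 * a * c - b ^ 2)) (2 ^ (n + α + 2)) := by
  obtain ⟨c₀, hc₀⟩ := hc
  subst hc₀
  obtain ⟨d, hdn⟩ : ∃ d, n = α + (d + 2) := ⟨n - α - 2, by omega⟩
  subst hdn
  have hcast_n : (((2:ℕ)^(α + (d + 2)) : ℕ):ℤ) = (2:ℤ)^(α + (d + 2)) := by push_cast; ring
  have hcast_α : (((2:ℕ)^α : ℕ):ℤ) = (2:ℤ)^α := by push_cast; ring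
  -- parity of b
  have hbcase : α = 0 ∨ Odd b := by
    rcases Nat.eq_zero_or_pos α with h0 | hpos
    · exact Or.inl h0
    · right
      obtain ⟨t, ht⟩ := Int.ModEq.dvd ha
      have h2a : (2:ℤ) ∣ a := by
        have h1 : (2:ℤ) ∣ (2:ℤ)^α * A := Dvd.dvd.mul_right (dvd_pow_self 2 hpos.ne') A
        have h2 : (2:ℤ) ∣ (2:ℤ)^(α + (d + 2)) := dvd_pow_self 2 (by omega)
        have : a = (2:ℤ)^α * A - ((2:ℤ)^α * A - a) := by ring
        rw [this, ht]
        exact dvd_sub h1 (h2.mul_right t)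
      have h2c : (2:ℤ) ∣ (2:ℤ)^α * c₀ := Dvd.dvd.mul_right (dvd_pow_self 2 hpos.ne') c₀
      rcases Int.even_or_odd b with he | ho
      · exfalso
        have h2b : (2:ℤ) ∣ b := even_iff_two_dvd.mp he
        have hg : (2:ℤ) ∣ ((Int.gcd (Int.gcd a b) ((2:ℤ)^α * c₀) : ℕ) : ℤ) :=
          Int.dvd_coe_gcd (Int.dvd_coe_gcd h2a h2b) h2c
        rw [habc] at hg
        norm_num at hg
      · exact ho
  -- divisibility condition for step2
  have hcond : ∀ y : ℕ, ((((2:ℕ)^α : ℕ):ℤ) ∣ S * b * (y:ℤ)) ↔ ((2:ℕ)^α ∣ y) := by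
    intro y
    constructor
    · intro hdvd
      rcases hbcase with h0 | hodd
      · subst h0; simpa using Nat.one_dvd y
      · have hcop : IsCoprime ((2:ℤ)^α) (S * b) := odd_isCoprime_pow α (hS.mul hodd)
        have h1 : (2:ℤ)^α ∣ (S * b) * (y:ℤ) := by
          rw [← hcast_α]
          exact hdvd
        have h2 : (2:ℤ)^α ∣ ((y:ℕ):ℤ) := hcop.dvd_of_dvd_mul_left h1
        rw [← hcast_α] at h2
        exact_mod_cast h2
    · intro h
      have h1 : (((2:ℕ)^α : ℕ):ℤ) ∣ ((y:ℕ):ℤ) := Int.natCast_dvd_natCast.mpr h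
      exact h1.mul_left (S * b)
  -- the discriminant congruence
  have hcong : S * A * (4 * a * ((2:ℤ)^α * c₀) - b ^ 2)
      ≡ S * A * (4 * A * ((2:ℤ)^α * ((2:ℤ)^α * c₀)) - b ^ 2)
        [ZMOD (((2:ℕ)^(d + 4 + 2 * α) : ℕ):ℤ)] := by
    obtain ⟨t, ht⟩ := Int.ModEq.dvd ha
    rw [Int.modEq_iff_dvd]
    exact ⟨S * A * c₀ * t, by push_cast; linear_combination (4*S*A*(2:ℤ)^α*c₀) * ht⟩
  -- doubling
  have hGbig : Gsum (S * A * (4 * A * ((2:ℤ)^α * ((2:ℤ)^α * c₀)) - b ^ 2)) (2 ^ (d + 4 + 2 * α))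
      = (2:ℂ)^α * Gsum (S * A * (4 * A * ((2:ℤ)^α * ((2:ℤ)^α * c₀)) - b ^ 2)) (2 ^ (d + 4)) := by
    rcases hbcase with h0 | hodd
    · subst h0
      norm_num
    · apply gsum_doubling_iter
      have hEv : Even (4 * A * ((2:ℤ)^α * ((2:ℤ)^α * c₀))) :=
        ⟨2 * A * ((2:ℤ)^α * ((2:ℤ)^α * c₀)), by ring⟩
      have hDodd : Odd (4 * A * ((2:ℤ)^α * ((2:ℤ)^α * c₀)) - b ^ 2) :=
        hEv.sub_odd (hodd.pow)
      exact (hS.mul hA).mul hDodd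
  have ha' : a ≡ (2:ℤ)^α * A [ZMOD (((2:ℕ)^(α + (d + 2)) : ℕ):ℤ)] := by
    rw [hcast_n]; exact ha
  calc Gsum2 a b ((2:ℤ)^α * c₀) S (2 ^ (α + (d + 2)))
      = Gsum2 ((2:ℤ)^α * A) b ((2:ℤ)^α * c₀) S (2 ^ (α + (d + 2))) := gsum2_congr_a ha'
    _ = (2:ℂ)^α * Gsum2 A b ((2:ℤ)^α * ((2:ℤ)^α * c₀)) S (2 ^ (d + 2)) :=
        step2 (d + 2) α S A b ((2:ℤ)^α * c₀) hS hcond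
    _ = (2:ℂ)^α * ((1 / 4 : ℂ) * Gsum (S * A) (2 ^ (d + 2)) *
          Gsum (S * A * (4 * A * ((2:ℤ)^α * ((2:ℤ)^α * c₀)) - b ^ 2)) (2 ^ (d + 4))) := by
        rw [step3 d S A b ((2:ℤ)^α * ((2:ℤ)^α * c₀)) hS hA]
    _ = (1 / 4 : ℂ) * Gsum (S * A) (2 ^ (α + (d + 2) - α)) *
          Gsum (S * A * (4 * a * ((2:ℤ)^α * c₀) - b ^ 2)) (2 ^ (α + (d + 2) + α + 2)) := by
        rw [show α + (d + 2) - α = d + 2 from by omega,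
          show α + (d + 2) + α + 2 = d + 4 + 2 * α from by omega,
          gsum_congr hcong, hGbig]
        ring
end

section
/- Let n > 1, S odd, and a,b,c integers with gcd(a,b,c)=1 such that 2^{n-1} | a and 2^{min(v_2(a),n)} | c. Then G(a,b,c;S;2^n) = 2^n. -/
open Finset

noncomputable def ek (k : ℕ) (m : ℤ) : ℂ :=
  Complex.exp (2 * Real.pi * Complex.I * (m : ℂ) / (k : ℂ))

lemma ek_add (k : ℕ) (m₁ m₂ : ℤ) : ek k (m₁ + m₂) = ek k m₁ * ek k m₂ := by
  rw [ek, ek, ek, ← Complex.exp_add]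
  congr 1
  push_cast
  ring

lemma ek_dvd (k : ℕ) (hk : k ≠ 0) (m : ℤ) (h : (k : ℤ) ∣ m) : ek k m = 1 := by
  obtain ⟨t, rfl⟩ := h
  rw [ek]
  have hk' : (k : ℂ) ≠ 0 := Nat.cast_ne_zero.mpr hk
  have h1 : 2 * (Real.pi : ℂ) * Complex.I * (((k : ℤ) * t : ℤ) : ℂ) / (k : ℂ)
      = (t : ℂ) * (2 * Real.pi * Complex.I) := by
    push_cast
    field_simp
  rw [h1, Complex.exp_int_mul_two_pi_mul_I]

lemma ek_congr (k : ℕ) (hk : k ≠ 0) (m₁ m₂ : ℤ) (h : (k : ℤ) ∣ m₁ - m₂) :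
    ek k m₁ = ek k m₂ := by
  have h2 : m₁ = m₂ + (m₁ - m₂) := by ring
  rw [h2, ek_add, ek_dvd k hk _ h, mul_one]

lemma ek_pow (k : ℕ) (m : ℤ) (x : ℕ) : ek k (m * x) = (ek k m) ^ x := by
  rw [ek, ek, ← Complex.exp_nat_mul]
  congr 1
  push_cast
  ring

lemma ek_geom (k : ℕ) (hk : 0 < k) (m : ℤ) :
    ∑ x ∈ range k, ek k (m * x) = if (k : ℤ) ∣ m then (k : ℂ) else 0 := by
  have hk0 : k ≠ 0 := hk.ne'
  by_cases h : (k : ℤ) ∣ m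
  · simp only [h, if_true]
    rw [Finset.sum_congr rfl (fun x _ => ek_dvd k hk0 _ (h.mul_right _))]
    simp
  · simp only [h, if_false]
    rw [Finset.sum_congr rfl (fun x _ => ek_pow k m x)]
    have hωk : (ek k m) ^ k = 1 := by
      rw [← ek_pow]
      exact ek_dvd k hk0 _ ⟨m, by ring⟩
    have hω1 : ek k m ≠ 1 := by
      intro h1
      apply h
      rw [ek, Complex.exp_eq_one_iff] at h1
      obtain ⟨t, ht⟩ := h1
      have hk' : (k : ℂ) ≠ 0 := Nat.cast_ne_zero.mpr hk0
      have hπ : (2 * (Real.pi : ℂ) * Complex.I) ≠ 0 := by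
        simp [Real.pi_ne_zero, Complex.I_ne_zero]
      have hmc : (m : ℂ) = (t : ℂ) * (k : ℂ) := by
        have h2 : 2 * (Real.pi : ℂ) * Complex.I * (m : ℂ)
            = 2 * (Real.pi : ℂ) * Complex.I * ((t : ℂ) * (k : ℂ)) := by
          field_simp at ht
          linear_combination (2 * (Real.pi : ℂ) * Complex.I) * ht
        exact mul_left_cancel₀ hπ h2
      have hmz : m = t * k := by exact_mod_cast hmc
      exact ⟨t, by rw [hmz]; ring⟩
    rw [geom_sum_eq hω1, hωk]
    simp

theorem stmt_16 (n : ℕ) (hn : 1 < n) (S a b c : ℤ) (hS : Odd S)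
    (habc : Int.gcd (Int.gcd a b) c = 1) (ha : (2 : ℤ) ^ (n - 1) ∣ a)
    (hc : ∀ α : ℕ, α ≤ n → (2 : ℤ) ^ α ∣ a → (2 : ℤ) ^ α ∣ c) :
    Gsum2 a b c S (2 ^ n) = (2 : ℂ) ^ n := by
  set k : ℕ := 2 ^ n with hkdef
  have hk : 0 < k := Nat.pow_pos (by norm_num)
  have hk0 : k ≠ 0 := hk.ne'
  have hkz : (k : ℤ) = 2 ^ n := by push_cast [hkdef]; ring
  obtain ⟨a', ha'⟩ := ha
  have h2n : (2 : ℤ) ^ n = 2 ^ (n - 1) * 2 := by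
    rw [← pow_succ]
    congr 1
    omega
  have h2a : (2 : ℤ) ∣ a := by
    rw [ha']
    exact Dvd.dvd.mul_right (dvd_pow_self 2 (by omega : n - 1 ≠ 0)) a'
  have h2c : (2 : ℤ) ∣ c := by
    have := hc 1 (by omega) (by simpa using h2a)
    simpa using this
  have hb : Odd b := by
    by_contra hbc
    rw [Int.not_odd_iff_even] at hbc
    have h2ab : (2 : ℤ) ∣ (Int.gcd a b : ℤ) := Int.dvd_coe_gcd h2a hbc.two_dvd
    have h2g : (2 : ℤ) ∣ (Int.gcd (Int.gcd a b) c : ℤ) := Int.dvd_coe_gcd h2ab h2c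
    rw [habc] at h2g
    norm_num at h2g
  have hcn1 : (2 : ℤ) ^ (n - 1) ∣ c := hc (n - 1) (by omega) ⟨a', ha'⟩
  have hSb : Odd (S * b) := hS.mul hb
  have hcop : IsCoprime ((k : ℤ)) (S * b) := by
    obtain ⟨t, ht⟩ := hSb
    have h2 : IsCoprime (2 : ℤ) (S * b) := ⟨-t, 1, by rw [ht]; ring⟩
    rw [hkz]
    exact h2.pow_left
  -- condition equivalence
  have hbe : (2 : ℤ) ∣ 1 + b := by
    obtain ⟨t, ht⟩ := hb
    exact ⟨t + 1, by rw [ht]; ring⟩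
  have hdiv1 : (k : ℤ) ∣ 2 ^ (n - 1) * S * a' * (1 + b) := by
    obtain ⟨t, ht⟩ := hbe
    refine ⟨S * a' * t, ?_⟩
    rw [hkz, ht, h2n]
    ring
  have cond_iff : ∀ y : ℤ, ((k : ℤ) ∣ (S * b * y + 2 ^ (n - 1) * S * a')) ↔
      (k : ℤ) ∣ y - 2 ^ (n - 1) * a' := by
    intro y
    constructor
    · intro h
      have h2 : (k : ℤ) ∣ (S * b) * (y - 2 ^ (n - 1) * a') := by
        have he : (S * b) * (y - 2 ^ (n - 1) * a')
            = (S * b * y + 2 ^ (n - 1) * S * a') - 2 ^ (n - 1) * S * a' * (1 + b) := by ring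
        rw [he]
        exact dvd_sub h hdiv1
      exact hcop.dvd_of_dvd_mul_left h2
    · rintro ⟨t, ht⟩
      have hy : y = 2 ^ (n - 1) * a' + (k : ℤ) * t := by linarith
      have he : S * b * y + 2 ^ (n - 1) * S * a'
          = 2 ^ (n - 1) * S * a' * (1 + b) + (k : ℤ) * (S * b * t) := by
        rw [hy]; ring
      rw [he]
      exact dvd_add hdiv1 ⟨S * b * t, rfl⟩
  -- the special solution
  set m0 : ℤ := 2 ^ (n - 1) * a' with hm0
  set y₀ : ℕ := (m0 % (k : ℤ)).toNat with hy₀def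
  have hy₀cast : (y₀ : ℤ) = m0 % (k : ℤ) :=
    Int.toNat_of_nonneg (Int.emod_nonneg _ (by exact_mod_cast hk0))
  have hy₀lt : y₀ < k := by
    have := Int.emod_lt_of_pos m0 (by exact_mod_cast hk : (0 : ℤ) < (k : ℤ))
    omega
  have hy₀dvd : (k : ℤ) ∣ (y₀ : ℤ) - m0 := by
    refine ⟨-(m0 / (k : ℤ)), ?_⟩
    have := Int.emod_add_mul_ediv m0 (k : ℤ)
    rw [hy₀cast]
    linarith
  have hpy₀ : (2 : ℤ) ^ (n - 1) ∣ (y₀ : ℤ) := by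
    have hpk : (2 : ℤ) ^ (n - 1) ∣ (k : ℤ) := by
      rw [hkz, h2n]; exact ⟨2, rfl⟩
    have hpm : (2 : ℤ) ^ (n - 1) ∣ m0 := ⟨a', rfl⟩
    have : (y₀ : ℤ) = ((y₀ : ℤ) - m0) + m0 := by ring
    rw [this]
    exact dvd_add (hpk.trans hy₀dvd) hpm
  -- divisibility of the exponential term at y₀
  have hexp0 : (k : ℤ) ∣ S * c * (y₀ : ℤ) ^ 2 := by
    obtain ⟨u, hu⟩ := hcn1
    obtain ⟨v, hv⟩ := hpy₀
    have h3 : (2 : ℤ) ^ (3 * (n - 1)) ∣ S * c * (y₀ : ℤ) ^ 2 := by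
      refine ⟨S * u * v ^ 2, ?_⟩
      rw [hu, hv]
      have : (3 : ℕ) * (n - 1) = (n - 1) + ((n - 1) + (n - 1)) := by ring
      rw [this, pow_add, pow_add]
      ring
    refine dvd_trans ?_ h3
    rw [hkz]
    exact pow_dvd_pow 2 (by omega)
  -- now compute the sum
  rw [Gsum2]
  have hterm : ∀ x y : ℕ,
      Complex.exp (2 * Real.pi * Complex.I *
        ((S * (a * (x : ℤ) ^ 2 + b * (x : ℤ) * (y : ℤ) + c * (y : ℤ) ^ 2) : ℤ) : ℂ) / (k : ℂ))
      = ek k ((S * b * (y : ℤ) + 2 ^ (n - 1) * S * a') * (x : ℤ) + S * c * (y : ℤ) ^ 2) := by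
    intro x y
    have h1 : Complex.exp (2 * Real.pi * Complex.I *
        ((S * (a * (x : ℤ) ^ 2 + b * (x : ℤ) * (y : ℤ) + c * (y : ℤ) ^ 2) : ℤ) : ℂ) / (k : ℂ))
        = ek k (S * (a * (x : ℤ) ^ 2 + b * (x : ℤ) * (y : ℤ) + c * (y : ℤ) ^ 2)) := rfl
    rw [h1]
    apply ek_congr k hk0
    have heven : Even ((x : ℤ) ^ 2 - (x : ℤ)) := by
      have := Int.even_mul_succ_self ((x : ℤ) - 1)
      have he : ((x : ℤ) - 1) * (((x : ℤ) - 1) + 1) = (x : ℤ) ^ 2 - (x : ℤ) := by ring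
      rwa [he] at this
    obtain ⟨t, ht⟩ := heven
    refine ⟨S * a' * t, ?_⟩
    rw [hkz, h2n]
    have he2 : S * (a * (x : ℤ) ^ 2 + b * (x : ℤ) * (y : ℤ) + c * (y : ℤ) ^ 2)
        - ((S * b * (y : ℤ) + 2 ^ (n - 1) * S * a') * (x : ℤ) + S * c * (y : ℤ) ^ 2)
        = 2 ^ (n - 1) * S * a' * ((x : ℤ) ^ 2 - (x : ℤ)) := by
      rw [ha']; ring
    rw [he2, ht]
    ring
  simp_rw [hterm]
  rw [Finset.sum_comm]
  have hinner : ∀ y : ℕ, y ∈ range k →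
      (∑ x ∈ range k, ek k ((S * b * (y : ℤ) + 2 ^ (n - 1) * S * a') * (x : ℤ) + S * c * (y : ℤ) ^ 2))
      = (if (k : ℤ) ∣ ((y : ℤ) - m0) then (k : ℂ) else 0) * ek k (S * c * (y : ℤ) ^ 2) := by
    intro y _
    have h1 : ∀ x : ℕ, x ∈ range k →
        ek k ((S * b * (y : ℤ) + 2 ^ (n - 1) * S * a') * (x : ℤ) + S * c * (y : ℤ) ^ 2)
        = ek k ((S * b * (y : ℤ) + 2 ^ (n - 1) * S * a') * (x : ℤ)) * ek k (S * c * (y : ℤ) ^ 2) :=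
      fun x _ => ek_add k _ _
    rw [Finset.sum_congr rfl h1, ← Finset.sum_mul, ek_geom k hk]
    congr 1
    simp only [cond_iff]
  rw [Finset.sum_congr rfl hinner]
  rw [Finset.sum_eq_single_of_mem y₀ (Finset.mem_range.mpr hy₀lt)]
  · rw [if_pos hy₀dvd, ek_dvd k hk0 _ hexp0, mul_one, hkdef]
    push_cast
    ring
  · intro y hy hne
    rw [if_neg, zero_mul]
    intro hdvd
    have hsub : (k : ℤ) ∣ ((y : ℤ) - (y₀ : ℤ)) := by
      have he : (y : ℤ) - (y₀ : ℤ) = ((y : ℤ) - m0) - ((y₀ : ℤ) - m0) := by ring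
      rw [he]
      exact dvd_sub hdvd hy₀dvd
    have hylt : y < k := Finset.mem_range.mp hy
    have hylt' : y < k := hylt
    have h0 : (y : ℤ) - (y₀ : ℤ) = 0 := by
      refine Int.eq_zero_of_abs_lt_dvd hsub ?_
      rw [abs_lt]
      constructor <;> [omega; omega]
    have : y = y₀ := by omega
    exact hne this
end

section
/- For any prime p > 3, n \ge 1, and S coprime to p, \sum_{x,y=0}^{p^n-1} e^{2\pi i S(x^2+xy+y^2)/p^n} = p^n (-3/p)^n, where (-3/p) is the Legendre symbol; for p = 3, the sum equals 3^{(2n+1)/2} (S/3) i; and for p = 2 with n \ge 2, the sum equals (-1)^n 2^n. -/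
open Finset

noncomputable def Ek (k : ℕ) (m : ℤ) : ℂ :=
  Complex.exp (2 * Real.pi * Complex.I * (m : ℂ) / (k : ℂ))

lemma Ek_add (k : ℕ) (m m' : ℤ) : Ek k (m + m') = Ek k m * Ek k m' := by
  rw [Ek, Ek, Ek, ← Complex.exp_add]
  congr 1
  push_cast
  ring

lemma Ek_zero (k : ℕ) : Ek k 0 = 1 := by simp [Ek]

lemma Ek_int_mul (k : ℕ) (hk : k ≠ 0) (t : ℤ) : Ek k ((k : ℤ) * t) = 1 := by
  rw [Ek]
  have hkc : (k : ℂ) ≠ 0 := Nat.cast_ne_zero.mpr hk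
  have : 2 * (Real.pi : ℂ) * Complex.I * (((k : ℤ) * t : ℤ) : ℂ) / (k : ℂ)
      = (t : ℂ) * (2 * Real.pi * Complex.I) := by
    push_cast
    field_simp
  rw [this, Complex.exp_int_mul_two_pi_mul_I]

lemma Ek_congr (k : ℕ) (hk : k ≠ 0) {m m' : ℤ} (h : (k : ℤ) ∣ m - m') :
    Ek k m = Ek k m' := by
  obtain ⟨t, ht⟩ := h
  have : m = m' + (k : ℤ) * t := by linarith
  rw [this, Ek_add, Ek_int_mul k hk, mul_one]

lemma Ek_dvd_eq_one (k : ℕ) (hk : k ≠ 0) {m : ℤ} (h : (k : ℤ) ∣ m) : Ek k m = 1 := by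
  rw [Ek_congr k hk (by simpa using h : (k:ℤ) ∣ m - 0), Ek_zero]

lemma Ek_scale (a k : ℕ) (ha : a ≠ 0) (hk : k ≠ 0) (m : ℤ) :
    Ek (a * k) ((a : ℤ) * m) = Ek k m := by
  rw [Ek, Ek]
  congr 1
  have hac : (a : ℂ) ≠ 0 := Nat.cast_ne_zero.mpr ha
  have hkc : (k : ℂ) ≠ 0 := Nat.cast_ne_zero.mpr hk
  push_cast
  field_simp

lemma Ek_pow (k : ℕ) (m : ℤ) (x : ℕ) : Ek k (m * x) = (Ek k m) ^ x := by
  rw [Ek, Ek, ← Complex.exp_nat_mul]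
  congr 1
  push_cast
  ring

lemma Ek_eq_one_iff (k : ℕ) (hk : k ≠ 0) (m : ℤ) : Ek k m = 1 ↔ (k : ℤ) ∣ m := by
  constructor
  · intro h
    rw [Ek, Complex.exp_eq_one_iff] at h
    obtain ⟨t, ht⟩ := h
    have hkc : (k : ℂ) ≠ 0 := Nat.cast_ne_zero.mpr hk
    have h2 : (2 : ℂ) * Real.pi * Complex.I ≠ 0 := by
      simp [Real.pi_ne_zero, Complex.I_ne_zero, Complex.ofReal_ne_zero]
    have hmc : (m : ℂ) = (t : ℂ) * (k : ℂ) := by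
      field_simp at ht
      apply mul_left_cancel₀ h2
      rw [ht]
      ring
    have hmc2 : ((m : ℂ)) = (((k * t : ℤ)) : ℂ) := by push_cast; rw [hmc]; ring
    exact ⟨t, by exact_mod_cast hmc2⟩
  · exact Ek_dvd_eq_one k hk

lemma sum_Ek (k : ℕ) (hk : k ≠ 0) (m : ℤ) :
    ∑ x ∈ range k, Ek k (m * x) = if (k : ℤ) ∣ m then (k : ℂ) else 0 := by
  simp_rw [Ek_pow]
  by_cases h : (k : ℤ) ∣ m
  · simp [Ek_dvd_eq_one k hk h, h]
  · rw [if_neg h]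
    have hne : Ek k m ≠ 1 := fun hc => h ((Ek_eq_one_iff k hk m).mp hc)
    rw [geom_sum_eq hne]
    have : Ek k m ^ k = 1 := by
      rw [← Ek_pow]
      exact Ek_dvd_eq_one k hk ⟨m, mul_comm _ _⟩
    rw [this, sub_self, zero_div]

lemma sum_range_mul_eq (f : ℕ → ℂ) (a b : ℕ) (ha : a ≠ 0) :
    ∑ x ∈ range (a * b), f x = ∑ u ∈ range a, ∑ v ∈ range b, f (u + a * v) := by
  rw [← Finset.sum_product']
  apply Finset.sum_nbij' (i := fun x => (x % a, x / a)) (j := fun p => p.1 + a * p.2)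
  · intro x hx
    rw [Finset.mem_range] at hx
    rw [Finset.mem_product, Finset.mem_range, Finset.mem_range]
    exact ⟨Nat.mod_lt _ (Nat.pos_of_ne_zero ha), Nat.div_lt_of_lt_mul (by omega)⟩
  · intro p hp
    rw [Finset.mem_product, Finset.mem_range, Finset.mem_range] at hp
    rw [Finset.mem_range]
    calc p.1 + a * p.2 < a + a * p.2 := by omega
    _ = a * (p.2 + 1) := by ring
    _ ≤ a * b := Nat.mul_le_mul_left a hp.2
  · intro x _
    exact Nat.mod_add_div x a
  · intro p hp
    rw [Finset.mem_product, Finset.mem_range, Finset.mem_range] at hp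
    ext
    · simp [Nat.add_mul_mod_self_left, Nat.mod_eq_of_lt hp.1]
    · simp [Nat.add_mul_div_left _ _ (Nat.pos_of_ne_zero ha), Nat.div_eq_of_lt hp.1]
  · intro x _
    rw [Nat.mod_add_div x a]

lemma sum_range_dvd_mul (f : ℕ → ℂ) (p N : ℕ) (hp : p ≠ 0) :
    ∑ x ∈ range (p * N), (if (p : ℤ) ∣ (x : ℤ) then f x else 0) = ∑ w ∈ range N, f (p * w) := by
  rw [sum_range_mul_eq _ p N hp]
  rw [Finset.sum_eq_single_of_mem 0 (Finset.mem_range.mpr (Nat.pos_of_ne_zero hp))]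
  · apply Finset.sum_congr rfl
    intro v _
    rw [if_pos (by push_cast; exact ⟨v, by ring⟩)]
    norm_num
  · intro u hu hune
    apply Finset.sum_eq_zero
    intro v _
    rw [if_neg]
    intro hdvd
    have : (p:ℤ) ∣ (u:ℤ) := by
      have : ((u + p * v : ℕ) : ℤ) = (u : ℤ) + (p:ℤ)*(v:ℤ) := by push_cast; ring
      rw [this] at hdvd
      exact (Int.dvd_add_right ⟨v, rfl⟩).mp (by rwa [add_comm] at hdvd)
    have hup : (p:ℤ) ∣ (u:ℤ) → p ∣ u := fun h => Int.ofNat_dvd.mp (by simpa using h)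
    have := Nat.le_of_dvd (Nat.pos_of_ne_zero hune) (hup this)
    rw [Finset.mem_range] at hu
    omega

lemma sum_range_zmod (k : ℕ) [NeZero k] (g : ZMod k → ℂ) :
    ∑ x ∈ range k, g (x : ZMod k) = ∑ z : ZMod k, g z := by
  refine Finset.sum_nbij' (fun x => ((x : ZMod k))) (fun z => z.val) ?_ ?_ ?_ ?_ ?_
  · intro x _; exact Finset.mem_univ _
  · intro z _; exact Finset.mem_range.mpr (ZMod.val_lt z)
  · intro x hx
    exact ZMod.val_cast_of_lt (Finset.mem_range.mp hx)
  · intro z _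
    exact ZMod.natCast_zmod_val z
  · intro x _; rfl

lemma int_sub_val_dvd (k : ℕ) [NeZero k] (t : ℤ) :
    (k : ℤ) ∣ t - (((t : ZMod k)).val : ℤ) := by
  rw [← ZMod.intCast_zmod_eq_zero_iff_dvd]
  push_cast
  rw [ZMod.natCast_zmod_val]
  ring

lemma Gsum_eq (a : ℤ) (k : ℕ) : Gsum a k = ∑ x ∈ range k, Ek k (a * (x:ℤ)^2) := rfl

lemma Gsum2_eq (S : ℤ) (k : ℕ) :
    Gsum2 1 1 1 S k = ∑ x ∈ range k, ∑ y ∈ range k,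
      Ek k (S * ((x:ℤ)^2 + (x:ℤ)*(y:ℤ) + (y:ℤ)^2)) := by
  unfold Gsum2 Ek
  simp only [one_mul]

lemma sum_zmod_affine (k : ℕ) [NeZero k] (g : ZMod k → ℂ) (u t b : ZMod k)
    (hu : u * t = 1) : ∑ z : ZMod k, g (u * z + b) = ∑ z : ZMod k, g z := by
  let e : ZMod k ≃ ZMod k :=
    { toFun := fun z => u * z + b
      invFun := fun w => t * (w - b)
      left_inv := by
        intro z
        simp only [add_sub_cancel_right, ← mul_assoc, mul_comm t u, hu, one_mul]
      right_inv := by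
        intro w
        simp only [← mul_assoc, hu, one_mul, sub_add_cancel] }
  exact Equiv.sum_comp e g

lemma Ek_sq_zmod (k : ℕ) [NeZero k] (c t : ℤ) :
    Ek k (c * t^2) = Ek k (c * (((t : ZMod k)).val : ℤ)^2) := by
  apply Ek_congr k (NeZero.ne k)
  obtain ⟨w, hw⟩ := int_sub_val_dvd k t
  set v : ℤ := (((t : ZMod k)).val : ℤ) with hv
  have ht : t = v + k * w := by linarith
  exact ⟨c * (2*v*w + k*w^2), by rw [ht]; ring⟩

lemma inner_shift (k : ℕ) [NeZero k] (hodd : ¬ 2 ∣ k) (c : ℤ) (y : ℕ) :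
    ∑ x ∈ range k, Ek k (c * (2*(x:ℤ) + (y:ℤ))^2) = Gsum c k := by
  set g : ZMod k → ℂ := fun z => Ek k (c * ((z.val : ℤ))^2) with hg
  have key : ∀ t : ℤ, Ek k (c * t^2) = g ((t : ZMod k)) := fun t => Ek_sq_zmod k c t
  have h2 : ∀ x : ℕ, Ek k (c * (2*(x:ℤ) + (y:ℤ))^2) = g (2 * (x : ZMod k) + (y : ZMod k)) := by
    intro x
    rw [key (2*(x:ℤ)+(y:ℤ))]
    congr 1
    push_cast
    ring
  simp_rw [h2]
  have h3 := sum_range_zmod k (fun z => g (2 * z + (y : ZMod k)))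
  rw [h3]
  obtain ⟨u, hu⟩ := (ZMod.isUnit_iff_coprime 2 k).mpr
    ((Nat.Prime.coprime_iff_not_dvd Nat.prime_two).mpr hodd)
  have hut : (2 : ZMod k) * ((u⁻¹ : (ZMod k)ˣ) : ZMod k) = 1 := by
    have hmi := u.mul_inv
    rw [hu] at hmi
    rw [show ((2:ℕ) : ZMod k) = (2 : ZMod k) by push_cast; rfl] at hmi
    exact hmi
  rw [sum_zmod_affine k g 2 _ (y : ZMod k) hut]
  rw [Gsum_eq]
  have h4 : ∀ x : ℕ, Ek k (c * (x:ℤ)^2) = g ((x : ZMod k)) := by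
    intro x
    rw [key ((x:ℕ):ℤ)]
    congr 1
    push_cast
    ring
  simp_rw [h4]
  exact (sum_range_zmod k g).symm

lemma Gsum2_factor (k : ℕ) [NeZero k] (hodd : ¬ 2 ∣ k) (S c : ℤ)
    (hc : (k:ℤ) ∣ 4*c - S) :
    Gsum2 1 1 1 S k = Gsum c k * Gsum (3*c) k := by
  rw [Gsum2_eq]
  obtain ⟨w, hw⟩ := hc
  have hterm : ∀ x y : ℕ, Ek k (S * ((x:ℤ)^2 + (x:ℤ)*(y:ℤ) + (y:ℤ)^2))
      = Ek k (c * (2*(x:ℤ) + (y:ℤ))^2) * Ek k (3*c*(y:ℤ)^2) := by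
    intro x y
    rw [← Ek_add]
    apply Ek_congr k (NeZero.ne k)
    refine ⟨-w * ((x:ℤ)^2 + (x:ℤ)*(y:ℤ) + (y:ℤ)^2), ?_⟩
    linear_combination (-((x:ℤ)^2 + (x:ℤ)*(y:ℤ) + (y:ℤ)^2)) * hw
  simp_rw [hterm]
  rw [Finset.sum_comm]
  have hrow : ∀ y ∈ range k,
      ∑ x ∈ range k, Ek k (c * (2*(x:ℤ) + (y:ℤ))^2) * Ek k (3*c*(y:ℤ)^2)
        = Gsum c k * Ek k (3*c*(y:ℤ)^2) := by
    intro y _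
    rw [← Finset.sum_mul, inner_shift k hodd c y]
  rw [Finset.sum_congr rfl hrow, ← Finset.mul_sum]
  rfl

lemma Gsum_rec (p : ℕ) (hp : p.Prime) (hp2 : p ≠ 2) (a : ℤ) (ha : ¬ (p:ℤ) ∣ a)
    (n : ℕ) (hn : 2 ≤ n) : Gsum a (p ^ n) = (p:ℂ) * Gsum a (p ^ (n-2)) := by
  have hp0 : p ≠ 0 := hp.pos.ne'
  have hM0 : p ^ (n-1) ≠ 0 := pow_ne_zero _ hp0
  have hN0 : p ^ (n-2) ≠ 0 := pow_ne_zero _ hp0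
  have hpn0 : p ^ n ≠ 0 := pow_ne_zero _ hp0
  have hsplit : p ^ n = p ^ (n-1) * p := by rw [← pow_succ]; congr 1; omega
  have hsplit2 : p ^ n = p^2 * p^(n-2) := by rw [← pow_add]; congr 1; omega
  have hsplit3 : p ^ (n-1) = p * p^(n-2) := by rw [← pow_succ']; congr 1; omega
  rw [Gsum_eq]
  rw [show range (p^n) = range (p^(n-1) * p) from by rw [hsplit]]
  rw [sum_range_mul_eq _ _ _ hM0]
  have hterm : ∀ u ∈ range (p^(n-1)), ∀ v ∈ range p,
      Ek (p^n) (a * ((u + p^(n-1)*v : ℕ):ℤ)^2)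
        = Ek (p^n) (a * (u:ℤ)^2) * Ek p ((2*a*u) * v) := by
    intro u _ v _
    have hexp : a * ((u + p^(n-1)*v : ℕ):ℤ)^2
        = a * (u:ℤ)^2 + ((p^(n-1):ℕ):ℤ) * ((2*a*u)*v)
          + (((p^(n-1):ℕ):ℤ))^2 * (a*(v:ℤ)^2) := by
      push_cast; ring
    rw [hexp, Ek_add, Ek_add]
    have h1 : Ek (p^n) (((p^(n-1):ℕ):ℤ) * ((2*a*(u:ℤ))*(v:ℤ)))
        = Ek p ((2*a*(u:ℤ))*(v:ℤ)) := by
      calc Ek (p^n) (((p^(n-1):ℕ):ℤ) * ((2*a*(u:ℤ))*(v:ℤ)))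
          = Ek (p^(n-1)*p) (((p^(n-1):ℕ):ℤ) * ((2*a*(u:ℤ))*(v:ℤ))) := by rw [← hsplit]
        _ = Ek p ((2*a*(u:ℤ))*(v:ℤ)) := Ek_scale _ _ hM0 hp0 _
    have h2 : Ek (p^n) ((((p^(n-1):ℕ):ℤ))^2 * (a*(v:ℤ)^2)) = 1 := by
      apply Ek_dvd_eq_one _ hpn0
      have hd : ((p^n : ℕ):ℤ) ∣ (((p^(n-1):ℕ):ℤ))^2 := by
        push_cast
        rw [← pow_mul]
        exact pow_dvd_pow _ (by omega)
      exact Dvd.dvd.mul_right hd _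
    rw [h1, h2, mul_one]
  rw [Finset.sum_congr rfl (fun u hu => Finset.sum_congr rfl (fun v hv => hterm u hu v hv))]
  have hrow : ∀ u ∈ range (p^(n-1)),
      ∑ v ∈ range p, Ek (p^n) (a*(u:ℤ)^2) * Ek p ((2*a*(u:ℤ))*(v:ℤ))
        = (p:ℂ) * (if (p:ℤ) ∣ (u:ℤ) then Ek (p^n) (a*(u:ℤ)^2) else 0) := by
    intro u _
    rw [← Finset.mul_sum, sum_Ek p hp0]
    by_cases hdvd : (p:ℤ) ∣ (u:ℤ)
    · rw [if_pos (Dvd.dvd.mul_left hdvd _), if_pos hdvd]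
      ring
    · rw [if_neg, if_neg hdvd]
      · ring
      · intro hc
        have hpZ : Prime ((p:ℤ)) := Nat.prime_iff_prime_int.mp hp
        rcases hpZ.dvd_mul.mp hc with h | h
        · rcases hpZ.dvd_mul.mp h with h2 | h2
          · have hle : p ∣ 2 := Int.ofNat_dvd.mp (by exact_mod_cast h2)
            exact hp2 ((Nat.prime_dvd_prime_iff_eq hp Nat.prime_two).mp hle)
          · exact ha h2
        · exact hdvd h
  rw [Finset.sum_congr rfl hrow, ← Finset.mul_sum]
  congr 1
  rw [show range (p^(n-1)) = range (p * p^(n-2)) from by rw [hsplit3]]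
  rw [sum_range_dvd_mul (fun u => Ek (p^n) (a*(u:ℤ)^2)) p (p^(n-2)) hp0]
  rw [Gsum_eq]
  apply Finset.sum_congr rfl
  intro w _
  have hw2 : (a * ((p*w:ℕ):ℤ)^2) = ((p^2:ℕ):ℤ) * (a * (w:ℤ)^2) := by push_cast; ring
  calc Ek (p^n) (a * ((p*w:ℕ):ℤ)^2)
      = Ek (p^2 * p^(n-2)) (((p^2:ℕ):ℤ) * (a*(w:ℤ)^2)) := by rw [← hsplit2, hw2]
    _ = Ek (p^(n-2)) (a*(w:ℤ)^2) := Ek_scale _ _ (pow_ne_zero _ hp0) hN0 _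

lemma Gsum_triple (q : ℕ) (hq : q ≠ 0) (a : ℤ) (n : ℕ) (hn : 1 ≤ n) :
    Gsum ((q:ℤ)*a) (q^n) = (q:ℂ) * Gsum a (q^(n-1)) := by
  have hN0 : q ^ (n-1) ≠ 0 := pow_ne_zero _ hq
  have hsplit : q ^ n = q * q^(n-1) := by rw [← pow_succ']; congr 1; omega
  have hsplit2 : q ^ n = q^(n-1) * q := by rw [← pow_succ]; congr 1; omega
  rw [Gsum_eq]
  have hterm : ∀ x ∈ range (q^n),
      Ek (q^n) ((q:ℤ)*a*(x:ℤ)^2) = Ek (q^(n-1)) (a*(x:ℤ)^2) := by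
    intro x _
    calc Ek (q^n) ((q:ℤ)*a*(x:ℤ)^2)
        = Ek (q * q^(n-1)) ((q:ℤ) * (a*(x:ℤ)^2)) := by rw [← hsplit]; ring_nf
      _ = Ek (q^(n-1)) (a*(x:ℤ)^2) := Ek_scale _ _ hq hN0 _
  rw [Finset.sum_congr rfl hterm]
  rw [show range (q^n) = range (q^(n-1) * q) from by rw [hsplit2]]
  rw [sum_range_mul_eq _ _ _ hN0]
  have hterm2 : ∀ u ∈ range (q^(n-1)), ∀ v ∈ range q,
      Ek (q^(n-1)) (a * ((u + q^(n-1)*v : ℕ):ℤ)^2) = Ek (q^(n-1)) (a*(u:ℤ)^2) := by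
    intro u _ v _
    apply Ek_congr _ hN0
    refine ⟨a*(2*u*v + ((q^(n-1):ℕ):ℤ)*v^2), ?_⟩
    push_cast
    ring
  rw [Finset.sum_congr rfl (fun u hu => Finset.sum_congr rfl (fun v hv => hterm2 u hu v hv))]
  simp only [Finset.sum_const, Finset.card_range, nsmul_eq_mul]
  rw [Gsum_eq, Finset.mul_sum]

lemma Gsum2_rec (S : ℤ) (hS : ¬ (2:ℤ) ∣ S) (n : ℕ) (hn : 2 ≤ n) :
    Gsum2 1 1 1 S (2^n) = 4 * Gsum2 1 1 1 S (2^(n-2)) := by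
  have h20 : (2:ℕ) ≠ 0 := by norm_num
  have hM0 : (2:ℕ) ^ (n-1) ≠ 0 := pow_ne_zero _ h20
  have hN0 : (2:ℕ) ^ (n-2) ≠ 0 := pow_ne_zero _ h20
  have hpn0 : (2:ℕ) ^ n ≠ 0 := pow_ne_zero _ h20
  have hsplit2 : (2:ℕ) ^ n = 2^2 * 2^(n-2) := by rw [← pow_add]; congr 1; omega
  have h2Z : Prime ((2:ℕ):ℤ) := Nat.prime_iff_prime_int.mp Nat.prime_two
  set M : ℕ := 2^(n-1) with hM
  have hsplit : (2:ℕ) ^ n = M * 2 := by rw [hM, ← pow_succ]; congr 1; omega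
  have hsplit3 : M = 2 * 2^(n-2) := by rw [hM, ← pow_succ']; congr 1; omega
  set T : ℕ → ℕ → ℂ := fun x y => Ek (2^n) (S * ((x:ℤ)^2 + (x:ℤ)*(y:ℤ) + (y:ℤ)^2)) with hT
  have hscaleM : ∀ m : ℤ, Ek (2^n) ((M:ℤ) * m) = Ek 2 m := by
    intro m
    calc Ek (2^n) ((M:ℤ) * m) = Ek (M * 2) ((M:ℤ) * m) := by rw [← hsplit]
      _ = Ek 2 m := Ek_scale _ _ hM0 h20 _
  have hMsq : ∀ m : ℤ, Ek (2^n) (((M:ℤ))^2 * m) = 1 := by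
    intro m
    apply Ek_dvd_eq_one _ hpn0
    have hd : ((2^n : ℕ):ℤ) ∣ ((M:ℤ))^2 := by
      rw [hM]
      push_cast
      rw [← pow_mul]
      exact pow_dvd_pow _ (by omega)
    exact Dvd.dvd.mul_right hd _
  have hcond1 : ∀ a b : ℕ, ((2:ℤ) ∣ S * (2*(a:ℤ) + (b:ℤ)) ↔ (2:ℤ) ∣ (b:ℤ)) := by
    intro a b
    constructor
    · intro h
      rcases h2Z.dvd_mul.mp (by exact_mod_cast h) with h1 | h1
      · exact absurd (by exact_mod_cast h1) hS
      · have h2 : (2:ℤ) ∣ 2*(a:ℤ) + (b:ℤ) := by exact_mod_cast h1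
        omega
    · intro h
      have h2 : (2:ℤ) ∣ (2*(a:ℤ) + (b:ℤ)) := by omega
      exact h2.mul_left S
  have hcond2 : ∀ a b : ℕ, ((2:ℤ) ∣ S * ((a:ℤ) + 2*(b:ℤ)) ↔ (2:ℤ) ∣ (a:ℤ)) := by
    intro a b
    constructor
    · intro h
      rcases h2Z.dvd_mul.mp (by exact_mod_cast h) with h1 | h1
      · exact absurd (by exact_mod_cast h1) hS
      · have h2 : (2:ℤ) ∣ ((a:ℤ) + 2*(b:ℤ)) := by exact_mod_cast h1
        omega
    · intro h
      have h2 : (2:ℤ) ∣ ((a:ℤ) + 2*(b:ℤ)) := by omega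
      exact h2.mul_left S
  rw [Gsum2_eq]
  rw [show range (2^n) = range (M * 2) from by rw [← hsplit]]
  rw [sum_range_mul_eq _ _ _ hM0]
  have step1 : ∀ a ∈ range M, ∀ u ∈ range 2,
      ∑ y ∈ range (M * 2), Ek (2^n)
        (S * (((a + M*u : ℕ):ℤ)^2 + ((a + M*u : ℕ):ℤ)*(y:ℤ) + (y:ℤ)^2))
      = ∑ b ∈ range M, ∑ v ∈ range 2,
          T a b * Ek 2 ((S * (2*(a:ℤ) + (b:ℤ))) * (u:ℤ))
            * Ek 2 ((S * ((a:ℤ) + 2*(b:ℤ))) * (v:ℤ)) := by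
    intro a _ u _
    rw [sum_range_mul_eq _ _ _ hM0]
    apply Finset.sum_congr rfl
    intro b _
    apply Finset.sum_congr rfl
    intro v _
    have hexp : S * (((a + M*u : ℕ):ℤ)^2 + ((a + M*u : ℕ):ℤ)*(((b + M*v : ℕ)):ℤ)
          + (((b + M*v : ℕ)):ℤ)^2)
        = S * ((a:ℤ)^2 + (a:ℤ)*(b:ℤ) + (b:ℤ)^2)
          + (M:ℤ) * ((S * (2*(a:ℤ) + (b:ℤ))) * (u:ℤ))
          + ((M:ℤ) * ((S * ((a:ℤ) + 2*(b:ℤ))) * (v:ℤ))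
          + ((M:ℤ))^2 * (S * ((u:ℤ)^2 + (u:ℤ)*(v:ℤ) + (v:ℤ)^2))) := by
      push_cast
      ring
    rw [hexp, Ek_add, Ek_add, Ek_add, hscaleM, hscaleM, hMsq, mul_one]
  rw [Finset.sum_congr rfl (fun a ha => Finset.sum_congr rfl (fun u hu => step1 a ha u hu))]
  have step2 : ∀ a ∈ range M,
      ∑ u ∈ range 2, ∑ b ∈ range M, ∑ v ∈ range 2,
        T a b * Ek 2 ((S * (2*(a:ℤ) + (b:ℤ))) * (u:ℤ))
          * Ek 2 ((S * ((a:ℤ) + 2*(b:ℤ))) * (v:ℤ))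
      = 4 * (if (2:ℤ) ∣ (a:ℤ) then
          (∑ b ∈ range M, if (2:ℤ) ∣ (b:ℤ) then T a b else 0) else 0) := by
    intro a _
    rw [Finset.sum_comm]
    have inner : ∀ b ∈ range M,
        ∑ u ∈ range 2, ∑ v ∈ range 2,
          T a b * Ek 2 ((S * (2*(a:ℤ) + (b:ℤ))) * (u:ℤ))
            * Ek 2 ((S * ((a:ℤ) + 2*(b:ℤ))) * (v:ℤ))
        = 4 * (if (2:ℤ) ∣ (a:ℤ) then (if (2:ℤ) ∣ (b:ℤ) then T a b else 0) else 0) := by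
      intro b _
      have hsplitsum : ∑ u ∈ range 2, ∑ v ∈ range 2,
          T a b * Ek 2 ((S * (2*(a:ℤ) + (b:ℤ))) * (u:ℤ))
            * Ek 2 ((S * ((a:ℤ) + 2*(b:ℤ))) * (v:ℤ))
          = T a b * (∑ u ∈ range 2, Ek 2 ((S * (2*(a:ℤ) + (b:ℤ))) * (u:ℤ)))
            * (∑ v ∈ range 2, Ek 2 ((S * ((a:ℤ) + 2*(b:ℤ))) * (v:ℤ))) := by
        simp_rw [← Finset.mul_sum, ← Finset.sum_mul]
        congr 1
        rw [Finset.mul_sum]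
      rw [hsplitsum, sum_Ek 2 h20, sum_Ek 2 h20]
      rw [show ((2:ℕ):ℤ) = (2:ℤ) from by norm_num]
      by_cases ha2 : (2:ℤ) ∣ (a:ℤ) <;> by_cases hb2 : (2:ℤ) ∣ (b:ℤ) <;>
        simp [ha2, hb2, hcond1 a b, hcond2 a b] <;> push_cast <;> ring
    rw [Finset.sum_congr rfl inner, ← Finset.mul_sum]
    by_cases ha2 : (2:ℤ) ∣ (a:ℤ)
    · simp [ha2]
    · simp [ha2]
  rw [Finset.sum_congr rfl step2, ← Finset.mul_sum]
  congr 1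
  simp only [show (2:ℤ) = ((2:ℕ):ℤ) from by norm_num]
  rw [show range M = range (2 * 2^(n-2)) from by rw [← hsplit3]]
  rw [sum_range_dvd_mul
    (fun a => ∑ b ∈ range (2 * 2^(n-2)), if ((2:ℕ):ℤ) ∣ (b:ℤ) then T a b else 0)
    2 (2^(n-2)) h20]
  have step3 : ∀ w ∈ range (2^(n-2)),
      (∑ b ∈ range (2 * 2^(n-2)), if ((2:ℕ):ℤ) ∣ (b:ℤ) then T (2*w) b else 0)
      = ∑ b ∈ range (2^(n-2)), T (2*w) (2*b) :=
    fun w _ => sum_range_dvd_mul (fun b => T (2*w) b) 2 (2^(n-2)) h20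
  rw [Finset.sum_congr rfl step3]
  rw [Gsum2_eq]
  apply Finset.sum_congr rfl
  intro x _
  apply Finset.sum_congr rfl
  intro y _
  simp only [hT]
  have hexp : S * (((2*x : ℕ):ℤ)^2 + ((2*x : ℕ):ℤ)*((2*y : ℕ):ℤ) + ((2*y : ℕ):ℤ)^2)
      = ((2^2 : ℕ):ℤ) * (S * ((x:ℤ)^2 + (x:ℤ)*(y:ℤ) + (y:ℤ)^2)) := by
    push_cast
    ring
  calc Ek (2^n) (S * (((2*x : ℕ):ℤ)^2 + ((2*x : ℕ):ℤ)*((2*y : ℕ):ℤ) + ((2*y : ℕ):ℤ)^2))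
      = Ek (2^2 * 2^(n-2)) (((2^2 : ℕ):ℤ) * (S * ((x:ℤ)^2 + (x:ℤ)*(y:ℤ) + (y:ℤ)^2))) := by
        rw [← hsplit2, hexp]
    _ = Ek (2^(n-2)) (S * ((x:ℤ)^2 + (x:ℤ)*(y:ℤ) + (y:ℤ)^2)) :=
        Ek_scale _ _ (by norm_num) hN0 _

lemma Gsum_one (a : ℤ) : Gsum a 1 = 1 := by
  rw [Gsum_eq, Finset.sum_range_one]
  exact Ek_dvd_eq_one 1 one_ne_zero (one_dvd _)

lemma Gsum2_one (S : ℤ) : Gsum2 1 1 1 S 1 = 1 := by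
  rw [Gsum2_eq, Finset.sum_range_one, Finset.sum_range_one]
  exact Ek_dvd_eq_one 1 one_ne_zero (one_dvd _)

lemma Ek_two_odd (S : ℤ) (hS : ¬ (2:ℤ) ∣ S) : Ek 2 S = -1 := by
  have h1 : Ek 2 S = Ek 2 1 := Ek_congr 2 (by norm_num) (by omega)
  rw [h1, Ek]
  have h2 : 2 * (Real.pi:ℂ) * Complex.I * (((1:ℤ)):ℂ) / ((2:ℕ):ℂ)
      = Real.pi * Complex.I := by
    push_cast
    ring
  rw [h2, Complex.exp_pi_mul_I]

lemma Gsum2_two (S : ℤ) (hS : ¬ (2:ℤ) ∣ S) : Gsum2 1 1 1 S 2 = -2 := by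
  rw [Gsum2_eq]
  simp only [Finset.sum_range_succ, Finset.sum_range_zero, Nat.cast_zero, Nat.cast_one,
    zero_add]
  rw [show S * ((0:ℤ)^2 + 0*0 + 0^2) = 0 by ring,
      show S * ((0:ℤ)^2 + 0*1 + 1^2) = S by ring,
      show S * ((1:ℤ)^2 + 1*0 + 0^2) = S by ring,
      show S * ((1:ℤ)^2 + 1*1 + 1^2) = 3*S by ring,
      Ek_zero, Ek_two_odd S hS]
  have h3 : Ek 2 (3*S) = Ek 2 S := Ek_congr 2 (by norm_num) ⟨S, by ring⟩
  rw [h3, Ek_two_odd S hS]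
  norm_num

lemma Ek_three_one : Ek 3 1 = -(1/2 : ℂ) + (Real.sqrt 3 / 2 : ℝ) * Complex.I := by
  rw [Ek]
  have h : 2 * (Real.pi:ℂ) * Complex.I * (((1:ℤ)):ℂ) / ((3:ℕ):ℂ)
      = ((2 * Real.pi / 3 : ℝ) : ℂ) * Complex.I := by
    push_cast
    ring
  rw [h, Complex.exp_mul_I, ← Complex.ofReal_cos, ← Complex.ofReal_sin]
  have hc : Real.cos (2 * Real.pi / 3) = -(1/2) := by
    have : (2 : ℝ) * Real.pi / 3 = Real.pi - Real.pi / 3 := by ring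
    rw [this, Real.cos_pi_sub, Real.cos_pi_div_three]
  have hs : Real.sin (2 * Real.pi / 3) = Real.sqrt 3 / 2 := by
    have : (2 : ℝ) * Real.pi / 3 = Real.pi - Real.pi / 3 := by ring
    rw [this, Real.sin_pi_sub, Real.sin_pi_div_three]
  rw [hc, hs]
  push_cast
  ring

lemma Ek_three_two : Ek 3 2 = -(1/2 : ℂ) - (Real.sqrt 3 / 2 : ℝ) * Complex.I := by
  have h1 : Ek 3 2 = Ek 3 (-1) := Ek_congr 3 (by norm_num) ⟨1, by ring⟩
  rw [h1, Ek]
  have h : 2 * (Real.pi:ℂ) * Complex.I * (((-1:ℤ)):ℂ) / ((3:ℕ):ℂ)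
      = ((-(2 * Real.pi / 3) : ℝ) : ℂ) * Complex.I := by
    push_cast
    ring
  rw [h, Complex.exp_mul_I, ← Complex.ofReal_cos, ← Complex.ofReal_sin]
  have hc : Real.cos (-(2 * Real.pi / 3)) = -(1/2) := by
    rw [Real.cos_neg]
    have : (2 : ℝ) * Real.pi / 3 = Real.pi - Real.pi / 3 := by ring
    rw [this, Real.cos_pi_sub, Real.cos_pi_div_three]
  have hs : Real.sin (-(2 * Real.pi / 3)) = -(Real.sqrt 3 / 2) := by
    rw [Real.sin_neg]
    have : (2 : ℝ) * Real.pi / 3 = Real.pi - Real.pi / 3 := by ring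
    rw [this, Real.sin_pi_sub, Real.sin_pi_div_three]
  rw [hc, hs]
  push_cast
  ring

lemma Gsum_three_expand (c : ℤ) : Gsum c 3 = 1 + 2 * Ek 3 c := by
  rw [Gsum_eq]
  simp only [Finset.sum_range_succ, Finset.sum_range_zero, Nat.cast_zero, Nat.cast_one,
    Nat.cast_ofNat, zero_add]
  rw [show c * (0:ℤ)^2 = 0 by ring, show c * (1:ℤ)^2 = c by ring,
      show c * (2:ℤ)^2 = 4*c by ring, Ek_zero]
  have h4 : Ek 3 (4*c) = Ek 3 c := Ek_congr 3 (by norm_num) ⟨c, by ring⟩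
  rw [h4]
  ring

lemma Gsum_three_of_one (c : ℤ) (h : (c : ZMod 3) = 1) :
    Gsum c 3 = (Real.sqrt 3 : ℝ) * Complex.I := by
  have hdvd : (3:ℤ) ∣ c - 1 := by
    have : ((c - 1 : ℤ) : ZMod 3) = 0 := by push_cast; rw [h]; ring
    exact (ZMod.intCast_zmod_eq_zero_iff_dvd _ 3).mp this
  rw [Gsum_three_expand, Ek_congr 3 (by norm_num) hdvd, Ek_three_one]
  push_cast
  ring

lemma Gsum_three_of_two (c : ℤ) (h : (c : ZMod 3) = 2) :
    Gsum c 3 = -((Real.sqrt 3 : ℝ) * Complex.I) := by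
  have hdvd : (3:ℤ) ∣ c - 2 := by
    have : ((c - 2 : ℤ) : ZMod 3) = 0 := by push_cast; rw [h]; ring
    exact (ZMod.intCast_zmod_eq_zero_iff_dvd _ 3).mp this
  rw [Gsum_three_expand, Ek_congr 3 (by norm_num) hdvd, Ek_three_two]
  push_cast
  ring

section PrimeGauss

variable (p : ℕ) [hpF : Fact p.Prime]

lemma quad_sq_one (z : ZMod p) (hz : z ≠ 0) :
    ((quadraticChar (ZMod p)).ringHomComp (Int.castRingHom ℂ)) z
      * ((quadraticChar (ZMod p)).ringHomComp (Int.castRingHom ℂ)) z = 1 := by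
  have hq := (quadraticChar_isQuadratic (ZMod p)).comp (Int.castRingHom ℂ)
  rcases hq z with h | h | h
  · exfalso
    rw [MulChar.ringHomComp_apply] at h
    have h0 : quadraticChar (ZMod p) z = 0 := by
      have : (((quadraticChar (ZMod p)) z : ℤ) : ℂ) = 0 := h
      exact_mod_cast this
    exact hz (quadraticChar_eq_zero_iff.mp h0)
  · rw [h]; norm_num
  · rw [h]; norm_num

lemma Gsum_prime (hp2 : p ≠ 2) (b : ℤ) (hb : ¬ (p:ℤ) ∣ b) :
    Gsum b p = ((quadraticChar (ZMod p)).ringHomComp (Int.castRingHom ℂ)) ((b : ZMod p))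
      * gaussSum ((quadraticChar (ZMod p)).ringHomComp (Int.castRingHom ℂ))
          (AddChar.zmodChar p
            (Complex.isPrimitiveRoot_exp p (Nat.Prime.ne_zero hpF.out)).pow_eq_one) := by
  classical
  have hp0 : p ≠ 0 := hpF.out.ne_zero
  set χ := (quadraticChar (ZMod p)).ringHomComp (Int.castRingHom ℂ) with hχdef
  set ψ := AddChar.zmodChar p
    (Complex.isPrimitiveRoot_exp p (Nat.Prime.ne_zero hpF.out)).pow_eq_one with hψdef
  have hψprim : ψ.IsPrimitive :=
    AddChar.zmodChar_primitive_of_primitive_root p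
      (Complex.isPrimitiveRoot_exp p (Nat.Prime.ne_zero hpF.out))
  have hψEk : ∀ m : ℤ, ψ ((m : ZMod p)) = Ek p m := by
    intro m
    rw [hψdef]
    rw [AddChar.zmodChar_apply]
    have h1 : Complex.exp (2 * Real.pi * Complex.I / p) ^ ((m : ZMod p)).val
        = Ek p ((((m : ZMod p)).val : ℕ) : ℤ) := by
      rw [← Complex.exp_nat_mul, Ek]
      congr 1
      push_cast
      ring
    rw [h1]
    obtain ⟨w, hw⟩ := int_sub_val_dvd p m
    exact Ek_congr p hp0 ⟨-w, by linear_combination -hw⟩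
  have hFF : ringChar (ZMod p) ≠ 2 := by
    rw [ZMod.ringChar_zmod_n]; exact hp2
  have hbz : ((b : ZMod p)) ≠ 0 := by
    intro h
    exact hb ((ZMod.intCast_zmod_eq_zero_iff_dvd _ _).mp h)
  have h1 : Gsum b p = ∑ z : ZMod p, ψ ((b : ZMod p) * z^2) := by
    rw [Gsum_eq]
    have hterm : ∀ x : ℕ, Ek p (b * (x:ℤ)^2)
        = (fun z : ZMod p => ψ ((b : ZMod p) * z^2)) ((x : ZMod p)) := by
      intro x
      rw [← hψEk (b * (x:ℤ)^2)]
      congr 1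
      push_cast
      ring
    rw [Finset.sum_congr rfl (fun x _ => hterm x)]
    exact sum_range_zmod p (fun z : ZMod p => ψ ((b : ZMod p) * z^2))
  rw [h1]
  have h2 : ∑ z : ZMod p, ψ ((b : ZMod p) * z^2)
      = ∑ t : ZMod p, ((Finset.univ.filter (fun z : ZMod p => z^2 = t)).card : ℂ)
          * ψ ((b : ZMod p) * t) := by
    rw [← Finset.sum_fiberwise_of_maps_to (fun z _ => Finset.mem_univ (z^2))
      (fun z => ψ ((b : ZMod p) * z^2))]
    apply Finset.sum_congr rfl
    intro t _
    rw [Finset.sum_congr rfl (fun z hz => by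
      rw [(Finset.mem_filter.mp hz).2] :
        ∀ z ∈ Finset.univ.filter (fun z : ZMod p => z^2 = t),
          ψ ((b : ZMod p) * z^2) = ψ ((b : ZMod p) * t))]
    rw [Finset.sum_const, nsmul_eq_mul]
  rw [h2]
  have hcard : ∀ t : ZMod p,
      ((Finset.univ.filter (fun z : ZMod p => z^2 = t)).card : ℂ) = χ t + 1 := by
    intro t
    have h0 := quadraticChar_card_sqrts hFF t
    have hset : {x : ZMod p | x ^ 2 = t}.toFinset
        = Finset.univ.filter (fun z : ZMod p => z^2 = t) := by
      ext z
      simp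
    rw [hset] at h0
    have h1' : (((Finset.univ.filter (fun z : ZMod p => z^2 = t)).card : ℤ) : ℂ)
        = ((quadraticChar (ZMod p) t + 1 : ℤ) : ℂ) := by rw [h0]
    push_cast at h1'
    exact h1'
  rw [Finset.sum_congr rfl (fun t _ => by rw [hcard t])]
  simp_rw [add_mul, one_mul]
  rw [Finset.sum_add_distrib]
  have hzero : ∑ t : ZMod p, ψ ((b : ZMod p) * t) = 0 := by
    have hms := AddChar.sum_mulShift ((b : ZMod p)) hψprim
    rw [if_neg hbz] at hms
    calc ∑ t : ZMod p, ψ ((b : ZMod p) * t) = ∑ t : ZMod p, ψ (t * (b : ZMod p)) := by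
          apply Finset.sum_congr rfl
          intro t _
          rw [mul_comm]
      _ = 0 := by simpa using hms
  rw [hzero, add_zero]
  have hshift : ∑ t : ZMod p, χ t * ψ ((b : ZMod p) * t)
      = gaussSum χ (AddChar.mulShift ψ ((b : ZMod p))) := by
    apply Finset.sum_congr rfl
    intro t _
    rw [AddChar.mulShift_apply]
  rw [hshift]
  have hmul := gaussSum_mulShift χ ψ (Units.mk0 ((b : ZMod p)) hbz)
  have hu : ((Units.mk0 ((b : ZMod p)) hbz : (ZMod p)ˣ) : ZMod p) = (b : ZMod p) := rfl
  rw [hu] at hmul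
  calc gaussSum χ (AddChar.mulShift ψ ((b : ZMod p)))
      = (χ ((b : ZMod p)) * χ ((b : ZMod p)))
          * gaussSum χ (AddChar.mulShift ψ ((b : ZMod p))) := by
        rw [quad_sq_one p _ hbz, one_mul]
    _ = χ ((b : ZMod p))
          * (χ ((b : ZMod p)) * gaussSum χ (AddChar.mulShift ψ ((b : ZMod p)))) := by
        ring
    _ = χ ((b : ZMod p)) * gaussSum χ ψ := by rw [hmul]

lemma Gsum_prime_mul (hp2 : p ≠ 2) (hp3 : p ≠ 3) (c : ℤ) (hc : ¬ (p:ℤ) ∣ c) :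
    Gsum c p * Gsum (3*c) p = ((legendreSym p (-3) : ℤ) : ℂ) * p := by
  classical
  have hp0 : p ≠ 0 := hpF.out.ne_zero
  have hpZ : Prime ((p:ℕ):ℤ) := Nat.prime_iff_prime_int.mp hpF.out
  have h3 : ¬ (p:ℤ) ∣ 3 := by
    intro h
    have hd : p ∣ 3 := Int.ofNat_dvd.mp (by exact_mod_cast h)
    have hle : p ≤ 3 := Nat.le_of_dvd (by norm_num) hd
    have h2le : 2 ≤ p := hpF.out.two_le
    interval_cases p <;> simp_all
  have hc3 : ¬ (p:ℤ) ∣ 3*c := by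
    intro h
    rcases hpZ.dvd_mul.mp (by exact_mod_cast h) with h1 | h1
    · exact h3 (by exact_mod_cast h1)
    · exact hc h1
  set χ := (quadraticChar (ZMod p)).ringHomComp (Int.castRingHom ℂ) with hχdef
  set ψ := AddChar.zmodChar p
    (Complex.isPrimitiveRoot_exp p (Nat.Prime.ne_zero hpF.out)).pow_eq_one with hψdef
  have hψprim : ψ.IsPrimitive :=
    AddChar.zmodChar_primitive_of_primitive_root p
      (Complex.isPrimitiveRoot_exp p (Nat.Prime.ne_zero hpF.out))
  have hχ1 : χ ≠ 1 := by
    rw [hχdef]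
    exact (MulChar.ringHomComp_ne_one_iff Int.cast_injective).mpr
      (quadraticChar_ne_one (by rw [ZMod.ringChar_zmod_n]; exact hp2))
  have hχq : χ.IsQuadratic := (quadraticChar_isQuadratic (ZMod p)).comp _
  have hsq := gaussSum_sq hχ1 hχq hψprim
  rw [Gsum_prime p hp2 c hc, Gsum_prime p hp2 (3*c) hc3]
  have hcz : ((c : ZMod p)) ≠ 0 := fun h => hc ((ZMod.intCast_zmod_eq_zero_iff_dvd _ _).mp h)
  have hargs : ((c : ZMod p)) * (((3*c : ℤ) : ZMod p)) * (-1)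
      = (((-3 : ℤ) : ZMod p)) * (((c : ZMod p)) * ((c : ZMod p))) := by
    push_cast
    ring
  have hχmul : χ ((c : ZMod p)) * χ (((3*c : ℤ) : ZMod p)) * χ (-1)
      = χ (((-3 : ℤ) : ZMod p)) * (χ ((c : ZMod p)) * χ ((c : ZMod p))) := by
    rw [← map_mul, ← map_mul, ← map_mul, ← map_mul, hargs]
  calc χ ((c : ZMod p)) * gaussSum χ ψ * (χ (((3*c : ℤ) : ZMod p)) * gaussSum χ ψ)
      = χ ((c : ZMod p)) * χ (((3*c : ℤ) : ZMod p)) * (gaussSum χ ψ)^2 := by ring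
    _ = χ ((c : ZMod p)) * χ (((3*c : ℤ) : ZMod p)) * (χ (-1) * (Fintype.card (ZMod p))) := by
        rw [hsq]
    _ = (χ ((c : ZMod p)) * χ (((3*c : ℤ) : ZMod p)) * χ (-1)) * p := by
        rw [ZMod.card]
        ring
    _ = (χ (((-3 : ℤ) : ZMod p)) * (χ ((c : ZMod p)) * χ ((c : ZMod p)))) * p := by
        rw [hχmul]
    _ = ((legendreSym p (-3) : ℤ) : ℂ) * p := by
        rw [quad_sq_one p _ hcz, mul_one]
        rfl

end PrimeGauss

lemma Gsum_pow (p : ℕ) (hp : p.Prime) (hp2 : p ≠ 2) (a : ℤ) (ha : ¬ (p:ℤ) ∣ a) :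
    ∀ m : ℕ, Gsum a (p^(2*m)) = (p:ℂ)^m ∧ Gsum a (p^(2*m+1)) = (p:ℂ)^m * Gsum a p := by
  intro m
  induction m with
  | zero =>
    constructor
    · rw [show 2*0 = 0 by ring, pow_zero, Gsum_one, pow_zero]
    · rw [show 2*0+1 = 1 by ring, pow_one, pow_zero, one_mul]
  | succ m ih =>
    constructor
    · have h := Gsum_rec p hp hp2 a ha (2*(m+1)) (by omega)
      rw [show 2*(m+1)-2 = 2*m by omega] at h
      rw [h, ih.1]
      ring
    · have h := Gsum_rec p hp hp2 a ha (2*(m+1)+1) (by omega)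
      rw [show 2*(m+1)+1-2 = 2*m+1 by omega] at h
      rw [h, ih.2]
      ring

lemma Gsum2_pow2 (S : ℤ) (hS : ¬ (2:ℤ) ∣ S) :
    ∀ m : ℕ, Gsum2 1 1 1 S (2^(2*m)) = (4:ℂ)^m
      ∧ Gsum2 1 1 1 S (2^(2*m+1)) = (4:ℂ)^m * (-2) := by
  intro m
  induction m with
  | zero =>
    constructor
    · rw [show 2*0 = 0 by ring, pow_zero, Gsum2_one, pow_zero]
    · rw [show 2*0+1 = 1 by ring, pow_one, pow_zero, one_mul, Gsum2_two S hS]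
  | succ m ih =>
    constructor
    · have h := Gsum2_rec S hS (2*(m+1)) (by omega)
      rw [show 2*(m+1)-2 = 2*m by omega] at h
      rw [h, ih.1]
      ring
    · have h := Gsum2_rec S hS (2*(m+1)+1) (by omega)
      rw [show 2*(m+1)+1-2 = 2*m+1 by omega] at h
      rw [h, ih.2]
      ring

lemma exists_c (p : ℕ) (hp : p.Prime) (hp2 : p ≠ 2) (n : ℕ) (S : ℤ) :
    ∃ c : ℤ, ((p:ℤ)^n) ∣ 4*c - S := by
  have hnat : Nat.Coprime 2 p := (Nat.coprime_primes Nat.prime_two hp).mpr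
    (fun h => hp2 h.symm)
  have hnat2 : Nat.Coprime (2^2) (p^n) := Nat.Coprime.pow _ _ hnat
  have hcop : IsCoprime (((2^2:ℕ)):ℤ) (((p^n:ℕ)):ℤ) := Nat.isCoprime_iff_coprime.mpr hnat2
  have hcop' : IsCoprime (4:ℤ) ((p:ℤ)^n) := by
    have h1 : (((2^2:ℕ)):ℤ) = 4 := by norm_num
    have h2 : (((p^n:ℕ)):ℤ) = (p:ℤ)^n := by push_cast; ring
    rwa [h1, h2] at hcop
  obtain ⟨u, v, huv⟩ := hcop'
  refine ⟨S*u, -(S*v), ?_⟩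
  linear_combination S * huv

theorem stmt_19 (p : ℕ) (hp : p.Prime) (n : ℕ) (hn : 0 < n) (S : ℤ)
    (hS : IsCoprime S (p : ℤ)) :
    (3 < p →
      Gsum2 1 1 1 S (p ^ n) = (p : ℂ) ^ n * ((@legendreSym p ⟨hp⟩ (-3) : ℤ) : ℂ) ^ n) ∧
    (p = 3 →
      Gsum2 1 1 1 S (3 ^ n) =
        (3 : ℂ) ^ n * (Real.sqrt 3 : ℂ) * ((@legendreSym 3 ⟨by norm_num⟩ S : ℤ) : ℂ) *
          Complex.I) ∧
    (p = 2 → 2 ≤ n →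
      Gsum2 1 1 1 S (2 ^ n) = (-1 : ℂ) ^ n * (2 : ℂ) ^ n) := by
  refine ⟨?_, ?_, ?_⟩
  · -- case p > 3
    intro hp3
    haveI hpF : Fact p.Prime := ⟨hp⟩
    have hp2 : p ≠ 2 := by omega
    have hp3' : p ≠ 3 := by omega
    have hp0 : p ≠ 0 := hp.ne_zero
    haveI : NeZero (p^n) := ⟨pow_ne_zero _ hp0⟩
    obtain ⟨c, hc⟩ := exists_c p hp hp2 n S
    have hpZ : Prime ((p:ℕ):ℤ) := Nat.prime_iff_prime_int.mp hp
    have hpS : ¬ (p:ℤ) ∣ S := by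
      intro h
      have : IsUnit ((p:ℕ):ℤ) := hS.isUnit_of_dvd' h dvd_rfl
      exact hpZ.not_unit this
    have hpc : ¬ (p:ℤ) ∣ c := by
      intro h
      apply hpS
      obtain ⟨w, hw⟩ := hc
      have hSw : S = 4*c - (p:ℤ)^n * w := by linarith
      rw [hSw]
      exact dvd_sub (h.mul_left 4) ((dvd_pow_self (p:ℤ) (by omega : n ≠ 0)).mul_right w)
    have hp3d : ¬ (p:ℤ) ∣ 3 := by
      intro h
      have hd : p ∣ 3 := Int.ofNat_dvd.mp (by exact_mod_cast h)
      have := Nat.le_of_dvd (by norm_num) hd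
      omega
    have hpc3 : ¬ (p:ℤ) ∣ 3*c := by
      intro h
      rcases hpZ.dvd_mul.mp (by exact_mod_cast h) with h1 | h1
      · exact hp3d (by exact_mod_cast h1)
      · exact hpc h1
    have hodd : ¬ 2 ∣ p^n := by
      intro h
      have h2p : 2 ∣ p := Nat.Prime.dvd_of_dvd_pow Nat.prime_two h
      have := (Nat.prime_dvd_prime_iff_eq Nat.prime_two hp).mp h2p
      omega
    have hc' : ((p^n : ℕ):ℤ) ∣ 4*c - S := by push_cast; exact hc
    have hfact := Gsum2_factor (p^n) hodd S c hc'
    rw [hfact]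
    have hm3 : (((-3 : ℤ)) : ZMod p) ≠ 0 := by
      intro h
      have : (p:ℤ) ∣ -3 := (ZMod.intCast_zmod_eq_zero_iff_dvd _ _).mp h
      exact hp3d (dvd_neg.mp (by simpa using this))
    have hε := legendreSym.eq_one_or_neg_one p hm3
    rcases Nat.even_or_odd n with he | ho
    · obtain ⟨m, hm⟩ := he
      have h1 := (Gsum_pow p hp hp2 c hpc m).1
      have h2 := (Gsum_pow p hp hp2 (3*c) hpc3 m).1
      rw [show 2*m = n by omega] at h1 h2
      rw [h1, h2]
      have hn2 : (p:ℂ)^m * (p:ℂ)^m = (p:ℂ)^n := by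
        rw [← pow_add]
        congr 1
        omega
      rcases hε with h | h <;> rw [h]
      · push_cast
        rw [one_pow, mul_one, hn2]
      · push_cast
        rw [(Even.neg_one_pow ⟨m, by omega⟩ : (-1:ℂ)^n = 1), mul_one, hn2]
    · obtain ⟨m, hm⟩ := ho
      have h1 := (Gsum_pow p hp hp2 c hpc m).2
      have h2 := (Gsum_pow p hp hp2 (3*c) hpc3 m).2
      rw [show 2*m+1 = n by omega] at h1 h2
      rw [h1, h2]
      rw [show (p:ℂ)^m * Gsum c p * ((p:ℂ)^m * Gsum (3*c) p)
          = (p:ℂ)^m * (p:ℂ)^m * (Gsum c p * Gsum (3*c) p) from by ring]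
      rw [Gsum_prime_mul p hp2 hp3' c hpc]
      have hpow : (p:ℂ)^m * (p:ℂ)^m * (p:ℂ) = (p:ℂ)^n := by
        rw [← pow_add, ← pow_succ]
        congr 1
        omega
      rcases hε with h | h <;> rw [h] <;> push_cast
      · rw [one_pow, mul_one, one_mul]
        exact hpow
      · rw [(Odd.neg_one_pow ⟨m, by omega⟩ : (-1:ℂ)^n = -1)]
        linear_combination -hpow
  · -- case p = 3
    intro hp3
    subst hp3
    haveI : NeZero ((3:ℕ)^n) := ⟨pow_ne_zero _ (by norm_num)⟩
    have h3p : (3:ℕ).Prime := by norm_num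
    obtain ⟨c, hc⟩ := exists_c 3 h3p (by norm_num) n S
    have h3Z : Prime ((3:ℕ):ℤ) := Nat.prime_iff_prime_int.mp h3p
    have h3S : ¬ ((3:ℕ):ℤ) ∣ S := by
      intro h
      exact h3Z.not_unit (hS.isUnit_of_dvd' h dvd_rfl)
    have h3c : ¬ ((3:ℕ):ℤ) ∣ c := by
      intro h
      apply h3S
      obtain ⟨w, hw⟩ := hc
      have hSw : S = 4*c - ((3:ℕ):ℤ)^n * w := by push_cast at hw ⊢; linarith
      rw [hSw]
      refine dvd_sub (h.mul_left 4) ?_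
      exact (dvd_pow_self ((3:ℕ):ℤ) (by omega : n ≠ 0)).mul_right w
    have hodd : ¬ 2 ∣ (3:ℕ)^n := by
      intro h
      have h2p : 2 ∣ 3 := Nat.Prime.dvd_of_dvd_pow Nat.prime_two h
      omega
    have hc' : ((3^n : ℕ):ℤ) ∣ 4*c - S := by push_cast; push_cast at hc; exact hc
    rw [Gsum2_factor (3^n) hodd S c hc']
    have htriple : Gsum (3*c) (3^n) = (3:ℂ) * Gsum c (3^(n-1)) := by
      have := Gsum_triple 3 (by norm_num) c n hn
      have hcast : ((3:ℕ):ℤ) * c = 3*c := by push_cast; ring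
      rw [hcast] at this
      rw [this]
      norm_num
    rw [htriple]
    -- value of Gsum c 3
    have hcS : ((c : ZMod 3)) = ((S : ZMod 3)) := by
      have hdvd : ((3:ℕ):ℤ) ∣ 4*c - S := dvd_trans (dvd_pow_self _ (by omega : n ≠ 0)) hc
      have h0 : (((4*c - S : ℤ)) : ZMod 3) = 0 := by
        rw [ZMod.intCast_zmod_eq_zero_iff_dvd]
        exact_mod_cast hdvd
      push_cast at h0
      have h30 : (3 : ZMod 3) = 0 := by decide
      linear_combination h0 - (c : ZMod 3) * h30
    have hSz : ((S : ZMod 3)) ≠ 0 := by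
      intro h
      apply h3S
      exact_mod_cast (ZMod.intCast_zmod_eq_zero_iff_dvd _ _).mp h
    have hcases : ∀ z : ZMod 3, z = 0 ∨ z = 1 ∨ z = 2 := by decide
    have hGc3 : Gsum c 3 = (Real.sqrt 3 : ℝ) * Complex.I
        * ((@legendreSym 3 ⟨by norm_num⟩ S : ℤ) : ℂ) := by
      rcases hcases ((S : ZMod 3)) with h | h | h
      · exact absurd h hSz
      · rw [Gsum_three_of_one c (hcS.trans h)]
        have hleg : @legendreSym 3 ⟨by norm_num⟩ S = 1 := by
          rw [legendreSym.eq_one_iff 3 (by rw [h]; norm_num)]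
          rw [h]
          exact IsSquare.one
        rw [hleg]
        norm_num
      · rw [Gsum_three_of_two c (hcS.trans h)]
        have hleg : @legendreSym 3 ⟨by norm_num⟩ S = -1 := by
          rw [legendreSym.eq_neg_one_iff]
          rw [h]
          decide
        rw [hleg]
        push_cast
        ring
    -- combine powers
    rcases Nat.even_or_odd n with he | ho
    · obtain ⟨m, hm⟩ := he
      have hm1 : 1 ≤ m := by omega
      have h1 := (Gsum_pow 3 h3p (by norm_num) c h3c m).1
      rw [show 2*m = n by omega] at h1
      have h2 := (Gsum_pow 3 h3p (by norm_num) c h3c (m-1)).2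
      rw [show 2*(m-1)+1 = n-1 by omega] at h2
      rw [h1, h2, hGc3]
      have hpow : ((3:ℕ):ℂ)^m * ((3:ℂ) * (((3:ℕ):ℂ)^(m-1))) = (3:ℂ)^n := by
        push_cast
        rw [show (3:ℂ)^m * ((3:ℂ) * (3:ℂ)^(m-1)) = (3:ℂ)^(m + 1 + (m-1)) from by
          rw [pow_add, pow_add, pow_one]; ring]
        congr 1
        omega
      calc ((3:ℕ):ℂ)^m * ((3:ℂ) * (((3:ℕ):ℂ)^(m-1)
            * ((Real.sqrt 3 : ℝ) * Complex.I * ((@legendreSym 3 ⟨by norm_num⟩ S : ℤ) : ℂ))))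
          = (((3:ℕ):ℂ)^m * ((3:ℂ) * (((3:ℕ):ℂ)^(m-1))))
            * ((Real.sqrt 3 : ℝ) * Complex.I * ((@legendreSym 3 ⟨by norm_num⟩ S : ℤ) : ℂ)) := by
            ring
        _ = (3:ℂ)^n * (Real.sqrt 3 : ℝ) * ((@legendreSym 3 ⟨by norm_num⟩ S : ℤ) : ℂ)
            * Complex.I := by rw [hpow]; ring
    · obtain ⟨m, hm⟩ := ho
      have h1 := (Gsum_pow 3 h3p (by norm_num) c h3c m).2
      rw [show 2*m+1 = n by omega] at h1
      have h2 := (Gsum_pow 3 h3p (by norm_num) c h3c m).1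
      rw [show 2*m = n-1 by omega] at h2
      rw [h1, h2, hGc3]
      have hpow : ((3:ℕ):ℂ)^m * ((3:ℂ) * (((3:ℕ):ℂ)^m)) = (3:ℂ)^n := by
        push_cast
        rw [show (3:ℂ)^m * ((3:ℂ) * (3:ℂ)^m) = (3:ℂ)^(m + 1 + m) from by
          rw [pow_add, pow_add, pow_one]; ring]
        congr 1
        omega
      calc ((3:ℕ):ℂ)^m
            * ((Real.sqrt 3 : ℝ) * Complex.I * ((@legendreSym 3 ⟨by norm_num⟩ S : ℤ) : ℂ))
            * ((3:ℂ) * (((3:ℕ):ℂ)^m))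
          = (((3:ℕ):ℂ)^m * ((3:ℂ) * (((3:ℕ):ℂ)^m)))
            * ((Real.sqrt 3 : ℝ) * Complex.I * ((@legendreSym 3 ⟨by norm_num⟩ S : ℤ) : ℂ)) := by
            ring
        _ = (3:ℂ)^n * (Real.sqrt 3 : ℝ) * ((@legendreSym 3 ⟨by norm_num⟩ S : ℤ) : ℂ)
            * Complex.I := by rw [hpow]; ring
  · -- case p = 2
    intro hp2 hn2
    subst hp2
    have h2S : ¬ (2:ℤ) ∣ S := by
      intro h
      have h2Z : Prime ((2:ℕ):ℤ) := Nat.prime_iff_prime_int.mp Nat.prime_two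
      exact h2Z.not_unit (hS.isUnit_of_dvd' (by exact_mod_cast h) dvd_rfl)
    rcases Nat.even_or_odd n with he | ho
    · obtain ⟨m, hm⟩ := he
      have h1 := (Gsum2_pow2 S h2S m).1
      rw [show 2*m = n by omega] at h1
      rw [h1]
      rw [(Even.neg_one_pow ⟨m, by omega⟩ : (-1:ℂ)^n = 1), one_mul]
      rw [show (4:ℂ) = 2^2 from by norm_num, ← pow_mul]
      congr 1
      omega
    · obtain ⟨m, hm⟩ := ho
      have h1 := (Gsum2_pow2 S h2S m).2
      rw [show 2*m+1 = n by omega] at h1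
      rw [h1]
      rw [(Odd.neg_one_pow ⟨m, by omega⟩ : (-1:ℂ)^n = -1)]
      rw [show (4:ℂ) = 2^2 from by norm_num, ← pow_mul]
      rw [show (2:ℂ)^(2*m) * (-2) = -(2:ℂ)^(2*m+1) from by rw [pow_succ]; ring]
      rw [show 2*m+1 = n by omega]
      ring
end
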